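/- arXiv:1411.4097 — 3 statements merged into one kernel-verified Lean document; each statement's English description precedes it below -/
import Mathlib

section
/- For the DRB game on the k-dimensional grid, there exists a constant κ > 0 (depending only on k and the granularity γ) such that for all n ≥ max(e^4, 2k): for any strategy profile r and any node u with r_u ≠ k, the payoff satisfies π_u(r) ≤ κ · n^{1−γ}. In particular one may take κ = (ξ_k^+)^2 · 2^{2k+7} · k^{k+4} / (γ · (ξ_k^−)^3), where ξ_k^−, ξ_k^+ are constants as in the context. -/
open Finset

noncomputable section

namespace DRB

/-- Nodes of the `k`-dimensional grid (torus) with side length `n`. -/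
abbrev Node (n k : ℕ) := Fin k → Fin n

/-- Grid (Manhattan) distance on the torus:
`d_M(u,v) = Σ_i min(|u_i - v_i|, n - |u_i - v_i|)`. -/
def dM (n k : ℕ) (u v : Node n k) : ℕ :=
  ∑ i, min ((u i : ℤ) - (v i : ℤ)).natAbs (n - ((u i : ℤ) - (v i : ℤ)).natAbs)

/-- All nodes different from `u`. -/
def others (n k : ℕ) (u : Node n k) : Finset (Node n k) :=
  Finset.univ.filter (fun v => v ≠ u)

/-- Normalization constant `c(s) = Σ_{v ≠ u} d_M(u,v)^{-s}` for node `u`. -/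
def cnorm (n k : ℕ) (u : Node n k) (s : ℝ) : ℝ :=
  ∑ v ∈ others n k u, (dM n k u v : ℝ) ^ (-s)

/-- Long-range link probability `p_u(v, s) = d_M(u,v)^{-s} / c(s)`. -/
def linkProb (n k : ℕ) (u v : Node n k) (s : ℝ) : ℝ :=
  (dM n k u v : ℝ) ^ (-s) / cnorm n k u s

/-- Link distance `D(s) = Σ_{v ≠ u} p_u(v,s) · d_M(u,v)` of node `u`. -/
def linkDist (n k : ℕ) (u : Node n k) (s : ℝ) : ℝ :=
  ∑ v ∈ others n k u, linkProb n k u v s * (dM n k u v : ℝ)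

/-- Reciprocity `P_u(r) = Σ_{v ≠ u} p_u(v, r_u) · p_v(u, r_v)`. -/
def recip (n k : ℕ) (r : Node n k → ℝ) (u : Node n k) : ℝ :=
  ∑ v ∈ others n k u, linkProb n k u v (r u) * linkProb n k v u (r v)

/-- DRB payoff `π_u(r) = D(r_u) · P_u(r)`. -/
def payoff (n k : ℕ) (r : Node n k → ℝ) (u : Node n k) : ℝ :=
  linkDist n k u (r u) * recip n k r u

/-- Membership in the strategy set `Σ = {0, γ, 2γ, 3γ, ...}`. -/
def InSigma (γ s : ℝ) : Prop := ∃ m : ℕ, s = m * γ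

/-- A valid strategy profile (every coordinate lies in `Σ`). -/
def ValidProfile (n k : ℕ) (γ : ℝ) (r : Node n k → ℝ) : Prop :=
  ∀ u, InSigma γ (r u)

/-- Nash equilibrium of the DRB game with strategy set `Σ` of granularity `γ`. -/
def IsNash (n k : ℕ) (γ : ℝ) (r : Node n k → ℝ) : Prop :=
  ∀ u : Node n k, ∀ s : ℝ, InSigma γ s →
    payoff n k r u ≥ payoff n k (Function.update r u s) u

/-- Strict Nash equilibrium. -/
def IsStrictNash (n k : ℕ) (γ : ℝ) (r : Node n k → ℝ) : Prop :=
  ∀ u : Node n k, ∀ s : ℝ, InSigma γ s → s ≠ r u →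
    payoff n k r u > payoff n k (Function.update r u s) u

/-- `t`-strong Nash equilibrium: no coalition of size ≤ `t` has a weakly
improving joint deviation that strictly improves some member. -/
def IsTStrongNash (n k : ℕ) (γ : ℝ) (t : ℕ) (r : Node n k → ℝ) : Prop :=
  ¬ ∃ (C : Finset (Node n k)) (s : Node n k → ℝ),
      C.Nonempty ∧ C.card ≤ t ∧ (∀ u ∈ C, InSigma γ (s u)) ∧
      (∀ u ∈ C,
        payoff n k (fun v => if v ∈ C then s v else r v) u ≥ payoff n k r u) ∧
      (∃ u ∈ C,
        payoff n k (fun v => if v ∈ C then s v else r v) u > payoff n k r u)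

/-- Strong Nash equilibrium: coalitions of any size. -/
def IsStrongNash (n k : ℕ) (γ : ℝ) (r : Node n k → ℝ) : Prop :=
  ¬ ∃ (C : Finset (Node n k)) (s : Node n k → ℝ),
      C.Nonempty ∧ (∀ u ∈ C, InSigma γ (s u)) ∧
      (∀ u ∈ C,
        payoff n k (fun v => if v ∈ C then s v else r v) u ≥ payoff n k r u) ∧
      (∃ u ∈ C,
        payoff n k (fun v => if v ∈ C then s v else r v) u > payoff n k r u)

/-- `b_u(j)`: the number of nodes at grid distance exactly `j` from `u`. -/
def countAt (n k : ℕ) (u : Node n k) (j : ℕ) : ℕ :=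
  (Finset.univ.filter (fun v => v ≠ u ∧ dM n k u v = j)).card

/-- One asynchronous best-response step: a single node switches to a best
response to the current profile, all other strategies unchanged. -/
def BRStep (n k : ℕ) (γ : ℝ) (r r' : Node n k → ℝ) : Prop :=
  ∃ (u : Node n k) (s : ℝ), InSigma γ s ∧
    (∀ t : ℝ, InSigma γ t →
      payoff n k (Function.update r u s) u ≥ payoff n k (Function.update r u t) u) ∧
    r' = Function.update r u s

/-- One synchronous best-response step: every node simultaneously switches
to a best response to the current profile `r`. -/
def SyncStep (n k : ℕ) (γ : ℝ) (r r' : Node n k → ℝ) : Prop :=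
  ∀ u : Node n k, InSigma γ (r' u) ∧
    ∀ t : ℝ, InSigma γ t →
      payoff n k (Function.update r u (r' u)) u ≥
        payoff n k (Function.update r u t) u

end DRB



namespace DRBAux

lemma bern {p u : ℝ} (hp0 : 0 ≤ p) (hp1 : p ≤ 1) (hu : u ≤ 1) :
    (1 - u) ^ p ≤ 1 - p * u := by
  have h := rpow_one_add_le_one_add_mul_self (s := -u) (by linarith) hp0 hp1
  have e : (1:ℝ) + -u = 1 - u := by ring
  rw [e] at h
  linarith

/-- P1: `p * (x+1)^(p-1) ≤ (x+1)^p - x^p` for `0 < p ≤ 1`, `0 ≤ x`. -/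
lemma P1 {p x : ℝ} (hp0 : 0 < p) (hp1 : p ≤ 1) (hx : 0 ≤ x) :
    p * (x + 1) ^ (p - 1) ≤ (x + 1) ^ p - x ^ p := by
  have hj : (0:ℝ) < x + 1 := by linarith
  set u : ℝ := (x + 1)⁻¹ with hu
  have hu0 : 0 < u := inv_pos.mpr hj
  have hu1 : u ≤ 1 := by
    rw [hu, inv_le_one_iff₀]; right; linarith
  have hxu : 1 - u = x * u := by rw [hu]; field_simp; ring
  have hber : (1 - u) ^ p ≤ 1 - p * u := bern hp0.le hp1 hu1
  rw [hxu] at hber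
  have hmul : (x * u) ^ p = x ^ p * u ^ p := Real.mul_rpow hx hu0.le
  have hup : u ^ p = ((x + 1) ^ p)⁻¹ := by
    rw [hu, ← Real.rpow_neg_one (x+1), ← Real.rpow_mul hj.le, neg_one_mul,
      Real.rpow_neg hj.le]
  have hjp : (0:ℝ) < (x + 1) ^ p := Real.rpow_pos_of_pos hj p
  have e1 : (x + 1) ^ (p - 1) = (x + 1) ^ p * u := by
    rw [hu, Real.rpow_sub hj, Real.rpow_one, div_eq_mul_inv]
  rw [e1]
  rw [hmul, hup] at hber
  have h2 := mul_le_mul_of_nonneg_right hber hjp.le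
  rw [mul_assoc, inv_mul_cancel₀ hjp.ne', mul_one] at h2
  nlinarith [h2]

/-- P2: `(x+1)^p - x^p ≤ p * x^(p-1)` for `0 < p ≤ 1`, `1 ≤ x`. -/
lemma P2 {p x : ℝ} (hp0 : 0 < p) (hp1 : p ≤ 1) (hx : 1 ≤ x) :
    (x + 1) ^ p - x ^ p ≤ p * x ^ (p - 1) := by
  have hx0 : (0:ℝ) < x := by linarith
  have hm1 : (-1:ℝ) ≤ 1/x := by
    have : (0:ℝ) ≤ 1/x := by positivity
    linarith
  have hber := rpow_one_add_le_one_add_mul_self (s := 1/x) hm1 hp0.le hp1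
  have h1 : (1:ℝ) + 1/x = (x+1) * x⁻¹ := by field_simp
  rw [h1] at hber
  have hmul : ((x+1) * x⁻¹) ^ p = (x+1) ^ p * (x⁻¹) ^ p :=
    Real.mul_rpow (by linarith) (by positivity)
  have hip : (x⁻¹) ^ p = (x ^ p)⁻¹ := Real.inv_rpow hx0.le p
  have hxp : (0:ℝ) < x ^ p := Real.rpow_pos_of_pos hx0 p
  rw [hmul, hip] at hber
  have e1 : x ^ (p - 1) = x ^ p * x⁻¹ := by
    rw [Real.rpow_sub hx0, Real.rpow_one, div_eq_mul_inv]
  rw [e1]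
  have h2 := mul_le_mul_of_nonneg_right hber hxp.le
  rw [mul_assoc, inv_mul_cancel₀ hxp.ne', mul_one, one_div] at h2
  nlinarith [h2]

/-- P3: `γ * (x+1)^(-1-γ) ≤ x^(-γ) - (x+1)^(-γ)` for `0 < γ ≤ 1`, `1 ≤ x`. -/
lemma P3 {γ x : ℝ} (hg0 : 0 < γ) (hg1 : γ ≤ 1) (hx : 1 ≤ x) :
    γ * (x + 1) ^ (-1 - γ) ≤ x ^ (-γ) - (x + 1) ^ (-γ) := by
  have hj : (0:ℝ) < x + 1 := by linarith
  set u : ℝ := (x + 1)⁻¹ with hu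
  have hu0 : 0 < u := inv_pos.mpr hj
  have hu2 : u ≤ 1/2 := by
    rw [hu, ← one_div, div_le_div_iff₀ hj (by norm_num)]; linarith
  have hxu : x = (x + 1) * (1 - u) := by rw [hu]; field_simp; ring
  have hber : (1 - u) ^ γ ≤ 1 - γ * u := bern hg0.le hg1 (by linarith)
  have h1u : (0:ℝ) < 1 - u := by linarith
  have hgu : 0 < 1 - γ * u := by nlinarith
  have hpos : (0:ℝ) < (1 - u) ^ γ := Real.rpow_pos_of_pos h1u γ
  have key : 1 + γ * u ≤ (1 - u) ^ (-γ) := by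
    have hneg : (1 - u) ^ (-γ) = ((1 - u) ^ γ)⁻¹ := Real.rpow_neg h1u.le γ
    have s1 : (1 + γ * u) ≤ (1 - γ * u)⁻¹ := by
      rw [← one_div, le_div_iff₀ hgu]; nlinarith [sq_nonneg (γ*u)]
    have s2 : (1 - γ * u)⁻¹ ≤ ((1 - u) ^ γ)⁻¹ := by
      apply one_div_le_one_div_of_le hpos hber |>.trans_eq (by rw [one_div]) |>.trans_eq' ?_
      rw [one_div]
    rw [hneg]; exact s1.trans s2
  have hxg : x ^ (-γ) = (x + 1) ^ (-γ) * (1 - u) ^ (-γ) := by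
    rw [← Real.mul_rpow hj.le h1u.le, ← hxu]
  have e2 : (x + 1) ^ (-1 - γ) = (x + 1) ^ (-γ) * u := by
    rw [hu, show (-1 - γ) = (-γ) + (-1) by ring, Real.rpow_add hj, Real.rpow_neg_one]
  have hp : (0:ℝ) < (x + 1) ^ (-γ) := Real.rpow_pos_of_pos hj _
  have h3 := mul_le_mul_of_nonneg_left key hp.le
  rw [← hxg] at h3
  rw [e2]
  nlinarith [h3]

end DRBAux

namespace DRBAux2
open DRBAux

/-- S1: `∑_{j=1}^M j^(p-1) ≤ M^p / p` for `0 < p ≤ 1`. -/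
lemma S1 {p : ℝ} (hp0 : 0 < p) (hp1 : p ≤ 1) (M : ℕ) :
    ∑ j ∈ Finset.Icc 1 M, (j:ℝ) ^ (p - 1) ≤ (M:ℝ) ^ p / p := by
  induction M with
  | zero => simp [Real.zero_rpow hp0.ne']
  | succ M ih =>
    rw [Finset.sum_Icc_succ_top (by omega : 1 ≤ M + 1)]
    have hP := P1 hp0 hp1 (Nat.cast_nonneg M : (0:ℝ) ≤ (M:ℝ))
    have h2 : ((M:ℝ)+1) ^ (p-1) ≤ (((M:ℝ)+1) ^ p - (M:ℝ) ^ p) / p := by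
      rw [le_div_iff₀ hp0]; nlinarith [hP]
    push_cast
    have : (M:ℝ) ^ p / p + (((M:ℝ)+1) ^ p - (M:ℝ) ^ p) / p = ((M:ℝ)+1) ^ p / p := by
      ring
    linarith [ih]

/-- S2: `(M+1)^p - 1 ≤ p * ∑_{j=1}^M j^(p-1)` for `0 < p ≤ 1`. -/
lemma S2 {p : ℝ} (hp0 : 0 < p) (hp1 : p ≤ 1) (M : ℕ) :
    ((M:ℝ) + 1) ^ p - 1 ≤ p * ∑ j ∈ Finset.Icc 1 M, (j:ℝ) ^ (p - 1) := by
  induction M with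
  | zero => simp
  | succ M ih =>
    rw [Finset.sum_Icc_succ_top (by omega : 1 ≤ M + 1)]
    have hP := P2 hp0 hp1 (by exact_mod_cast Nat.one_le_iff_ne_zero.mpr (Nat.succ_ne_zero M) : (1:ℝ) ≤ (M:ℝ)+1)
    push_cast
    have e : (M:ℝ) + 1 + 1 = ((M:ℝ)+1) + 1 := by ring
    nlinarith [ih, hP]

/-- S3: `∑_{j=1}^M j^(-1-γ) ≤ 1 + 1/γ` for `0 < γ ≤ 1`. -/
lemma S3 {γ : ℝ} (hg0 : 0 < γ) (hg1 : γ ≤ 1) (M : ℕ) :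
    ∑ j ∈ Finset.Icc 1 M, (j:ℝ) ^ (-1-γ) ≤ 1 + 1/γ := by
  rcases Nat.eq_zero_or_pos M with rfl | hM
  · simp; positivity
  have key : ∀ N : ℕ, 1 ≤ N → ∑ j ∈ Finset.Icc 1 N, (j:ℝ) ^ (-1-γ) ≤
      1 + (1 - (N:ℝ) ^ (-γ)) / γ := by
    intro N hN
    induction N with
    | zero => omega
    | succ N ih =>
      rcases Nat.eq_zero_or_pos N with rfl | hN1
      · norm_num [Real.one_rpow]
      rw [Finset.sum_Icc_succ_top (by omega : 1 ≤ N + 1)]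
      have hP := P3 hg0 hg1 (by exact_mod_cast hN1 : (1:ℝ) ≤ (N:ℝ))
      have h2 : ((N:ℝ)+1) ^ (-1-γ) ≤ ((N:ℝ) ^ (-γ) - ((N:ℝ)+1) ^ (-γ)) / γ := by
        rw [le_div_iff₀ hg0]; nlinarith [hP]
      have := ih hN1
      push_cast
      have e : (1:ℝ) + (1 - (N:ℝ) ^ (-γ)) / γ + ((N:ℝ) ^ (-γ) - ((N:ℝ)+1) ^ (-γ)) / γ
          = 1 + (1 - ((N:ℝ)+1) ^ (-γ)) / γ := by ring
      linarith
  have h := key M hM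
  have : (0:ℝ) ≤ (M:ℝ) ^ (-γ) := Real.rpow_nonneg (Nat.cast_nonneg M) _
  have h1g : (1 - (M:ℝ) ^ (-γ)) / γ ≤ 1/γ :=
    div_le_div_of_nonneg_right (by linarith) hg0.le
  linarith

end DRBAux2

section GridLemmas
open DRBAux DRBAux2 Real DRB

variable {n k : ℕ}

lemma mem_others_iff {u v : DRB.Node n k} : v ∈ DRB.others n k u ↔ v ≠ u := by
  simp [DRB.others]

lemma dM_comm (u v : DRB.Node n k) : DRB.dM n k u v = DRB.dM n k v u := by
  unfold DRB.dM
  refine Finset.sum_congr rfl fun i _ => ?_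
  have : ((u i : ℤ) - (v i : ℤ)).natAbs = ((v i : ℤ) - (u i : ℤ)).natAbs := by omega
  rw [this]

lemma one_le_dM {u v : DRB.Node n k} (h : v ≠ u) : 1 ≤ DRB.dM n k u v := by
  obtain ⟨i, hi⟩ := Function.ne_iff.mp h
  have h1 : (v i : ℕ) ≠ (u i : ℕ) := fun hc => hi (Fin.ext hc)
  have h2 : (u i : ℕ) < n := (u i).isLt
  have h3 : (v i : ℕ) < n := (v i).isLt
  have key : 1 ≤ min ((u i : ℤ) - (v i : ℤ)).natAbs (n - ((u i : ℤ) - (v i : ℤ)).natAbs) := by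
    omega
  calc 1 ≤ min ((u i : ℤ) - (v i : ℤ)).natAbs (n - ((u i : ℤ) - (v i : ℤ)).natAbs) := key
    _ ≤ DRB.dM n k u v := by
        unfold DRB.dM
        exact Finset.single_le_sum (f := fun j => min ((u j : ℤ) - (v j : ℤ)).natAbs (n - ((u j : ℤ) - (v j : ℤ)).natAbs)) (fun j _ => Nat.zero_le _) (Finset.mem_univ i)

lemma dM_le (u v : DRB.Node n k) : DRB.dM n k u v ≤ k * (n / 2) := by
  unfold DRB.dM
  calc ∑ i : Fin k, min ((u i : ℤ) - (v i : ℤ)).natAbs (n - ((u i : ℤ) - (v i : ℤ)).natAbs)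
      ≤ ∑ _i : Fin k, n / 2 := by
        refine Finset.sum_le_sum fun i _ => ?_
        omega
    _ = k * (n / 2) := by rw [Finset.sum_const, Finset.card_univ, Fintype.card_fin, smul_eq_mul]

lemma card_node : Fintype.card (DRB.Node n k) = n ^ k := by
  rw [Fintype.card_fun, Fintype.card_fin, Fintype.card_fin]

/-- Fiberwise decomposition of sums over `others` by distance. -/
lemma sum_others_eq (u : DRB.Node n k) (f : ℕ → ℝ) :
    ∑ v ∈ DRB.others n k u, f (DRB.dM n k u v) =
      ∑ j ∈ Finset.Icc 1 (k * (n / 2)), (DRB.countAt n k u j : ℝ) * f j := by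
  rw [← Finset.sum_fiberwise_of_maps_to (g := fun v => DRB.dM n k u v)
    (t := Finset.Icc 1 (k * (n / 2)))
    (fun v hv => Finset.mem_Icc.mpr ⟨one_le_dM (mem_others_iff.mp hv), dM_le u v⟩)
    (fun v => f (DRB.dM n k u v))]
  refine Finset.sum_congr rfl fun j _ => ?_
  have hcard : (Finset.filter (fun v => DRB.dM n k u v = j) (DRB.others n k u)).card
      = DRB.countAt n k u j := by
    unfold DRB.countAt DRB.others
    rw [Finset.filter_filter]
  rw [← hcard]
  rw [Finset.sum_congr rfl (fun v hv => by rw [(Finset.mem_filter.mp hv).2])]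
  rw [Finset.sum_const, nsmul_eq_mul]

end GridLemmas


section CnormLemmas
open DRBAux DRBAux2 Real DRB Finset

variable {n k : ℕ}

lemma cnorm_eq (u : DRB.Node n k) (s : ℝ) :
    DRB.cnorm n k u s =
      ∑ j ∈ Finset.Icc 1 (k * (n / 2)), (DRB.countAt n k u j : ℝ) * (j : ℝ) ^ (-s) :=
  sum_others_eq u (fun j => (j : ℝ) ^ (-s))

lemma linkDist_eq (u : DRB.Node n k) (s : ℝ) :
    DRB.linkDist n k u s =
      ∑ j ∈ Finset.Icc 1 (k * (n / 2)),
        (DRB.countAt n k u j : ℝ) * ((j : ℝ) ^ (-s) / DRB.cnorm n k u s * (j : ℝ)) :=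
  sum_others_eq u (fun j => (j : ℝ) ^ (-s) / DRB.cnorm n k u s * (j : ℝ))

lemma cnorm_nonneg (u : DRB.Node n k) (s : ℝ) : 0 ≤ DRB.cnorm n k u s :=
  Finset.sum_nonneg fun v _ => Real.rpow_nonneg (Nat.cast_nonneg _) _

lemma cnorm_pos (hn : 2 ≤ n) (hk : 1 ≤ k) (u : DRB.Node n k) (s : ℝ) :
    0 < DRB.cnorm n k u s := by
  have hcard : 1 < Fintype.card (DRB.Node n k) := by
    rw [card_node]
    exact Nat.one_lt_pow (by omega) hn
  obtain ⟨v, hv⟩ := Fintype.exists_ne_of_one_lt_card hcard u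
  refine Finset.sum_pos (fun w hw => ?_) ⟨v, mem_others_iff.mpr hv⟩
  have h1 : 1 ≤ DRB.dM n k u w := one_le_dM (mem_others_iff.mp hw)
  exact Real.rpow_pos_of_pos (by exact_mod_cast h1 : (0:ℝ) < (DRB.dM n k u w : ℝ)) _

lemma linkProb_nonneg (u v : DRB.Node n k) (s : ℝ) : 0 ≤ DRB.linkProb n k u v s :=
  div_nonneg (Real.rpow_nonneg (Nat.cast_nonneg _) _) (cnorm_nonneg u s)

lemma sum_linkProb (hn : 2 ≤ n) (hk : 1 ≤ k) (u : DRB.Node n k) (s : ℝ) :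
    ∑ v ∈ DRB.others n k u, DRB.linkProb n k u v s = 1 := by
  unfold DRB.linkProb
  rw [← Finset.sum_div]
  exact div_self (cnorm_pos hn hk u s).ne'

lemma linkProb_le_one (hn : 2 ≤ n) (hk : 1 ≤ k) {u v : DRB.Node n k} (huv : u ≠ v) (s : ℝ) :
    DRB.linkProb n k v u s ≤ 1 := by
  unfold DRB.linkProb
  rw [div_le_one (cnorm_pos hn hk v s)]
  exact Finset.single_le_sum
    (f := fun w => (DRB.dM n k v w : ℝ) ^ (-s))
    (fun w _ => Real.rpow_nonneg (Nat.cast_nonneg _) _)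
    (mem_others_iff.mpr huv)

lemma recip_nonneg (r : DRB.Node n k → ℝ) (u : DRB.Node n k) : 0 ≤ DRB.recip n k r u :=
  Finset.sum_nonneg fun v _ => mul_nonneg (linkProb_nonneg _ _ _) (linkProb_nonneg _ _ _)

lemma linkDist_nonneg (u : DRB.Node n k) (s : ℝ) : 0 ≤ DRB.linkDist n k u s :=
  Finset.sum_nonneg fun v _ => mul_nonneg (linkProb_nonneg _ _ _) (Nat.cast_nonneg _)

lemma linkDist_le (hn : 2 ≤ n) (hk : 1 ≤ k) (u : DRB.Node n k) (s : ℝ) :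
    DRB.linkDist n k u s ≤ (k * (n / 2) : ℕ) := by
  have h1 : DRB.linkDist n k u s ≤
      ∑ v ∈ DRB.others n k u, DRB.linkProb n k u v s * (k * (n / 2) : ℕ) := by
    refine Finset.sum_le_sum fun v hv => ?_
    exact mul_le_mul_of_nonneg_left (by exact_mod_cast dM_le u v) (linkProb_nonneg _ _ _)
  rw [← Finset.sum_mul, sum_linkProb hn hk u s, one_mul] at h1
  exact h1

/-- Lower bound `ξm ≤ c(t)` valid for all `t ≥ 0`. -/
lemma chigh (hk : 1 ≤ k) {ξm : ℝ}
    (hb1' : ∀ n : ℕ, ∀ u : DRB.Node n k, ∀ j : ℕ, 1 ≤ j → j ≤ n / 2 →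
      ξm * (j : ℝ) ^ (k - 1) ≤ (DRB.countAt n k u j : ℝ))
    (hn : 2 ≤ n) (v : DRB.Node n k) (t : ℝ) :
    ξm ≤ DRB.cnorm n k v t := by
  rw [cnorm_eq]
  have h1 : ξm ≤ (DRB.countAt n k v 1 : ℝ) * (1 : ℝ) ^ (-t) := by
    have := hb1' n v 1 le_rfl (by omega)
    simpa using this
  have hmem : 1 ∈ Finset.Icc 1 (k * (n / 2)) := by
    refine Finset.mem_Icc.mpr ⟨le_rfl, ?_⟩
    exact Nat.mul_pos (by omega) (by omega)
  calc ξm ≤ (DRB.countAt n k v 1 : ℝ) * ((1:ℕ) : ℝ) ^ (-t) := by push_cast; exact h1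
    _ ≤ ∑ j ∈ Finset.Icc 1 (k * (n / 2)), (DRB.countAt n k v j : ℝ) * (j : ℝ) ^ (-t) :=
        Finset.single_le_sum
          (f := fun j : ℕ => (DRB.countAt n k v j : ℝ) * (j : ℝ) ^ (-t))
          (fun j _ => mul_nonneg (Nat.cast_nonneg _) (Real.rpow_nonneg (Nat.cast_nonneg _) _))
          hmem

/-- Lower bound `ξm·n^γ/4 ≤ c(t)` for `0 ≤ t ≤ k - γ`. -/
lemma clow {g : ℕ} (hk : 1 ≤ k) (hg : 2 ≤ g) {ξm : ℝ} (hξm : 0 ≤ ξm)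
    (hb1' : ∀ n : ℕ, ∀ u : DRB.Node n k, ∀ j : ℕ, 1 ≤ j → j ≤ n / 2 →
      ξm * (j : ℝ) ^ (k - 1) ≤ (DRB.countAt n k u j : ℝ))
    (hn : 55 ≤ n) (v : DRB.Node n k) (t : ℝ) (ht0 : 0 ≤ t)
    (ht : t ≤ (k : ℝ) - (g : ℝ)⁻¹) :
    ξm * (n : ℝ) ^ ((g : ℝ)⁻¹) / 4 ≤ DRB.cnorm n k v t := by
  set γ : ℝ := (g : ℝ)⁻¹ with hγdef
  have hgR : (2 : ℝ) ≤ g := by exact_mod_cast hg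
  have hγ0 : 0 < γ := by rw [hγdef]; positivity
  have hγ1 : γ ≤ 1 := by
    rw [hγdef, inv_le_one_iff₀]; right; linarith
  have hgγ : (g : ℝ) * γ = 1 := mul_inv_cancel₀ (by positivity)
  set M := n / 2 with hMdef
  have hM27 : 27 ≤ M := by omega
  -- step 1: cnorm ≥ ξm * ∑_{j=1}^M j^(γ-1)
  have step1 : ξm * ∑ j ∈ Finset.Icc 1 M, (j : ℝ) ^ (γ - 1) ≤ DRB.cnorm n k v t := by
    rw [cnorm_eq, Finset.mul_sum]
    have hsub : Finset.Icc 1 M ⊆ Finset.Icc 1 (k * M) := by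
      apply Finset.Icc_subset_Icc_right
      exact Nat.le_mul_of_pos_left _ (by omega)
    refine le_trans (Finset.sum_le_sum fun j hj => ?_)
      (Finset.sum_le_sum_of_subset_of_nonneg hsub fun j _ _ =>
        mul_nonneg (Nat.cast_nonneg _) (Real.rpow_nonneg (Nat.cast_nonneg _) _))
    obtain ⟨hj1, hjM⟩ := Finset.mem_Icc.mp hj
    have hj1R : (1 : ℝ) ≤ (j : ℝ) := by exact_mod_cast hj1
    have hj0R : (0 : ℝ) < (j : ℝ) := by linarith
    have hbj := hb1' n v j hj1 hjM
    have hkey : (j : ℝ) ^ (γ - 1) ≤ (j : ℝ) ^ (k - 1 : ℕ) * (j : ℝ) ^ (-t) := by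
      rw [← Real.rpow_natCast (j : ℝ) (k - 1), ← Real.rpow_add hj0R]
      apply Real.rpow_le_rpow_of_exponent_le hj1R
      have : ((k - 1 : ℕ) : ℝ) = (k : ℝ) - 1 := by
        rw [Nat.cast_sub hk, Nat.cast_one]
      rw [this]
      linarith
    calc ξm * (j : ℝ) ^ (γ - 1) ≤ ξm * ((j : ℝ) ^ (k - 1 : ℕ) * (j : ℝ) ^ (-t)) :=
          mul_le_mul_of_nonneg_left hkey hξm
      _ = (ξm * (j : ℝ) ^ (k - 1 : ℕ)) * (j : ℝ) ^ (-t) := by ring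
      _ ≤ (DRB.countAt n k v j : ℝ) * (j : ℝ) ^ (-t) :=
          mul_le_mul_of_nonneg_right hbj (Real.rpow_nonneg (Nat.cast_nonneg _) _)
  -- step 2: ∑_{j=1}^M j^(γ-1) ≥ n^γ/4
  have hS2 := S2 hγ0 hγ1 M
  set x : ℝ := ((M : ℝ) + 1) ^ γ with hxdef
  have hx0 : 0 < x := Real.rpow_pos_of_pos (by positivity) _
  have hn2M : (n : ℝ) ≤ 2 * ((M : ℝ) + 1) := by
    have : n ≤ 2 * (M + 1) := by omega
    exact_mod_cast this
  have hnγx : (n : ℝ) ^ γ ≤ 2 * x := by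
    calc (n : ℝ) ^ γ ≤ (2 * ((M : ℝ) + 1)) ^ γ :=
          Real.rpow_le_rpow (Nat.cast_nonneg n) hn2M hγ0.le
      _ = (2 : ℝ) ^ γ * x := Real.mul_rpow (by norm_num) (by positivity)
      _ ≤ 2 * x := by
          apply mul_le_mul_of_nonneg_right ?_ hx0.le
          calc (2:ℝ) ^ γ ≤ (2:ℝ) ^ (1:ℝ) :=
                Real.rpow_le_rpow_of_exponent_le (by norm_num) hγ1
            _ = 2 := Real.rpow_one 2
  have hgx : (n : ℝ) ^ γ / 4 ≤ (x - 1) / γ := by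
    have hcases : x / 2 ≤ (g : ℝ) * (x - 1) := by
      rcases le_or_gt 2 x with h2 | h2
      · nlinarith
      · -- x < 2
        have hlog : 1 ≤ Real.log ((M : ℝ) + 1) := by
          rw [Real.le_log_iff_exp_le (by positivity)]
          calc Real.exp 1 ≤ 2.7182818286 := (Real.exp_one_lt_d9).le
            _ ≤ (M : ℝ) + 1 := by
                have : (27 : ℝ) ≤ (M : ℝ) := by exact_mod_cast hM27
                linarith
        have hxexp : x = Real.exp (Real.log ((M : ℝ) + 1) * γ) := by
          rw [hxdef, Real.rpow_def_of_pos (by positivity)]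
        have hxlb : Real.log ((M : ℝ) + 1) * γ + 1 ≤ x := by
          rw [hxexp]; exact Real.add_one_le_exp _
        have : (g : ℝ) * (x - 1) ≥ (g : ℝ) * (Real.log ((M : ℝ) + 1) * γ) := by
          apply mul_le_mul_of_nonneg_left ?_ (by positivity)
          linarith
        have e2 : (g : ℝ) * (Real.log ((M : ℝ) + 1) * γ) = Real.log ((M : ℝ) + 1) := by
          rw [hγdef]; field_simp
        nlinarith
    have hγinv : (x - 1) / γ = (g : ℝ) * (x - 1) := by
      rw [hγdef, div_eq_mul_inv, inv_inv]; ring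
    rw [hγinv]
    nlinarith
  -- combine
  have hsum : (n : ℝ) ^ γ / 4 ≤ ∑ j ∈ Finset.Icc 1 M, (j : ℝ) ^ (γ - 1) := by
    have : (x - 1) / γ ≤ ∑ j ∈ Finset.Icc 1 M, (j : ℝ) ^ (γ - 1) := by
      rw [div_le_iff₀ hγ0]
      nlinarith [hS2]
    linarith
  calc ξm * (n : ℝ) ^ γ / 4 = ξm * ((n : ℝ) ^ γ / 4) := by ring
    _ ≤ ξm * ∑ j ∈ Finset.Icc 1 M, (j : ℝ) ^ (γ - 1) := mul_le_mul_of_nonneg_left hsum hξm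
    _ ≤ DRB.cnorm n k v t := step1

end CnormLemmas


section ConstBound

set_option maxHeartbeats 1000000 in
/-- The combined coefficient bound. -/
lemma const_bound (k g : ℕ) (hk : 1 ≤ k) (hg : 2 ≤ g) {ξm ξp : ℝ}
    (hm : 0 < ξm) (hp : 0 < ξp) (hmp : ξm ≤ ξp) (hm2 : ξm ≤ 2 ^ (k + 1)) :
    2*(k:ℝ)/ξm + 4*(k:ℝ)*(g:ℝ)*ξp/ξm^2 + (g:ℝ)*ξp*(k:ℝ)^2/ξm + 2*(k:ℝ)*ξp/ξm ≤
      ξp ^ 2 * 2 ^ (2 * k + 7) * (k : ℝ) ^ (k + 4) / ((g : ℝ)⁻¹ * ξm ^ 3) := by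
  have hgR : (2:ℝ) ≤ (g:ℝ) := by exact_mod_cast hg
  have hkR : (1:ℝ) ≤ (k:ℝ) := by exact_mod_cast hk
  have hg0 : (0:ℝ) < (g:ℝ) := by linarith
  have hk0 : (0:ℝ) < (k:ℝ) := by linarith
  have hP4 : (4:ℝ) ≤ 2 ^ (k + 1) := by
    calc (4:ℝ) = 2 ^ 2 := by norm_num
      _ ≤ 2 ^ (k + 1) := pow_le_pow_right₀ (by norm_num) (by omega)
  set P : ℝ := 2 ^ (k + 1) with hPdef
  have hP0 : (0:ℝ) < P := by positivity
  -- RHS rewrite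
  have hRHS : ξp ^ 2 * 2 ^ (2 * k + 7) * (k : ℝ) ^ (k + 4) / ((g : ℝ)⁻¹ * ξm ^ 3)
      = (g:ℝ) * (ξp ^ 2 * 2 ^ (2 * k + 7) * (k : ℝ) ^ (k + 4)) / ξm ^ 3 := by
    field_simp
  -- LHS rewrite
  have hLHS : 2*(k:ℝ)/ξm + 4*(k:ℝ)*(g:ℝ)*ξp/ξm^2 + (g:ℝ)*ξp*(k:ℝ)^2/ξm + 2*(k:ℝ)*ξp/ξm
      = (2*(k:ℝ)*ξm^2 + 4*(k:ℝ)*(g:ℝ)*ξp*ξm + (g:ℝ)*ξp*(k:ℝ)^2*ξm^2 + 2*(k:ℝ)*ξp*ξm^2) / ξm^3 := by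
    field_simp
  rw [hRHS, hLHS]
  apply div_le_div_of_nonneg_right ?_ (by positivity)
  -- numerator inequality
  have hxi2 : ξm^2 ≤ ξp^2 := by nlinarith
  have hpm : ξp*ξm ≤ ξp^2 := by nlinarith
  have hmm : ξm^2 ≤ P*ξp := by nlinarith
  have t1 : 2*(k:ℝ)*ξm^2 ≤ 2*(k:ℝ)*ξp^2 := by
    linarith [mul_le_mul_of_nonneg_left hxi2 (show (0:ℝ) ≤ 2*(k:ℝ) by positivity)]
  have t2 : 4*(k:ℝ)*(g:ℝ)*ξp*ξm ≤ 4*(k:ℝ)*(g:ℝ)*ξp^2 := by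
    linarith [mul_le_mul_of_nonneg_left hpm (show (0:ℝ) ≤ 4*(k:ℝ)*(g:ℝ) by positivity)]
  have t3 : (g:ℝ)*ξp*(k:ℝ)^2*ξm^2 ≤ (g:ℝ)*(k:ℝ)^2*P*ξp^2 := by
    linarith [mul_le_mul_of_nonneg_left hmm (show (0:ℝ) ≤ (g:ℝ)*ξp*(k:ℝ)^2 by positivity)]
  have t4 : 2*(k:ℝ)*ξp*ξm^2 ≤ 2*(k:ℝ)*P*ξp^2 := by
    linarith [mul_le_mul_of_nonneg_left hmm (show (0:ℝ) ≤ 2*(k:ℝ)*ξp by positivity)]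
  have hkk : (k:ℝ) ≤ (k:ℝ)^2 := by nlinarith
  have hgP : (8:ℝ) ≤ (g:ℝ)*P := by nlinarith
  have scalar : 2*(k:ℝ) + 4*(k:ℝ)*(g:ℝ) + (g:ℝ)*(k:ℝ)^2*P + 2*(k:ℝ)*P
      ≤ 8*(g:ℝ)*P*(k:ℝ)^2 := by
    nlinarith [mul_nonneg (mul_nonneg hg0.le hP0.le) (sub_nonneg.mpr hkk),
      mul_nonneg hk0.le (sub_nonneg.mpr hgP),
      mul_nonneg (mul_nonneg hk0.le hP0.le) (sub_nonneg.mpr hgR),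
      mul_nonneg (mul_nonneg hg0.le hk0.le) (sub_nonneg.mpr hP4)]
  have hfin : (8:ℝ)*(g:ℝ)*P*(k:ℝ)^2*ξp^2 ≤ (g:ℝ) * (ξp ^ 2 * 2 ^ (2 * k + 7) * (k : ℝ) ^ (k + 4)) := by
    have e1 : (8:ℝ)*P = 2 ^ (k + 4) := by
      rw [hPdef, show (8:ℝ) = 2^3 by norm_num, ← pow_add]
      congr 1
      omega
    have e2 : (2:ℝ) ^ (k + 4) ≤ 2 ^ (2 * k + 7) := pow_le_pow_right₀ (by norm_num) (by omega)
    have e3 : (k:ℝ)^2 ≤ (k:ℝ)^(k + 4) := pow_le_pow_right₀ hkR (by omega)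
    calc (8:ℝ)*(g:ℝ)*P*(k:ℝ)^2*ξp^2 = (g:ℝ) * (ξp^2 * ((8*P) * (k:ℝ)^2)) := by ring
      _ = (g:ℝ) * (ξp^2 * ((2:ℝ)^(k+4) * (k:ℝ)^2)) := by rw [e1]
      _ ≤ (g:ℝ) * (ξp^2 * ((2:ℝ)^(2*k+7) * (k:ℝ)^(k+4))) := by
          apply mul_le_mul_of_nonneg_left ?_ hg0.le
          apply mul_le_mul_of_nonneg_left ?_ (by positivity)
          exact mul_le_mul e2 e3 (by positivity) (by positivity)
      _ = (g:ℝ) * (ξp ^ 2 * 2 ^ (2 * k + 7) * (k : ℝ) ^ (k + 4)) := by ring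
  linarith [t1, t2, t3, t4, mul_le_mul_of_nonneg_right scalar (sq_nonneg ξp), hfin]

end ConstBound


section RecipLemmas
open DRBAux DRBAux2 Real DRB Finset

/-- Bound on the return probability `p_v(u, r_v)` for any valid strategy value. -/
lemma pvu_bound {n k g : ℕ} (hk : 1 ≤ k) (hg : 2 ≤ g) {ξm : ℝ} (hξm : 0 < ξm)
    (hb1' : ∀ n : ℕ, ∀ u : DRB.Node n k, ∀ j : ℕ, 1 ≤ j → j ≤ n / 2 →
      ξm * (j : ℝ) ^ (k - 1) ≤ (DRB.countAt n k u j : ℝ))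
    (hn55 : 55 ≤ n) (r : DRB.Node n k → ℝ) (hval : DRB.ValidProfile n k (g : ℝ)⁻¹ r)
    (u v : DRB.Node n k) (hv : v ∈ DRB.others n k u) :
    DRB.linkProb n k v u (r v) ≤
      4 / (ξm * (n : ℝ) ^ ((g : ℝ)⁻¹)) + (DRB.dM n k u v : ℝ) ^ (-(k : ℝ)) / ξm := by
  set γ : ℝ := (g : ℝ)⁻¹ with hγdef
  have hg0 : (0:ℝ) < g := by positivity
  have hγ0 : 0 < γ := by rw [hγdef]; positivity
  have hgγ : (g : ℝ) * γ = 1 := mul_inv_cancel₀ hg0.ne'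
  have hn2 : 2 ≤ n := by omega
  have hvu : v ≠ u := mem_others_iff.mp hv
  have hd1 : (1:ℝ) ≤ (DRB.dM n k v u : ℝ) := by
    exact_mod_cast one_le_dM (Ne.symm hvu)
  have hA0 : (0:ℝ) < (n:ℝ) ^ γ := Real.rpow_pos_of_pos (by positivity) _
  have hcv := cnorm_pos hn2 hk v (r v)
  obtain ⟨m', hm'⟩ := hval v
  have hrv0 : 0 ≤ r v := by rw [hm']; positivity
  have hdM : DRB.dM n k v u = DRB.dM n k u v := dM_comm v u
  rcases le_or_gt m' (k * g - 1) with hle | hgt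
  · -- low class : r v ≤ k - γ
    have hrvk : r v ≤ (k:ℝ) - γ := by
      rw [hm']
      have hc : ((m' : ℝ)) ≤ ((k * g - 1 : ℕ) : ℝ) := by exact_mod_cast hle
      have hc2 : ((k * g - 1 : ℕ) : ℝ) = (k:ℝ) * (g:ℝ) - 1 := by
        have : 1 ≤ k * g := Nat.mul_pos (by omega) (by omega)
        push_cast [Nat.cast_sub this]
        ring
      have h3 : (m' : ℝ) * γ ≤ ((k:ℝ) * (g:ℝ) - 1) * γ := by
        apply mul_le_mul_of_nonneg_right ?_ hγ0.le
        rw [← hc2]; exact hc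
      have h4 : ((k:ℝ) * (g:ℝ) - 1) * γ = (k:ℝ) - γ := by
        rw [sub_mul, one_mul, mul_assoc, hgγ, mul_one]
      linarith
    have hclow := clow hk hg hξm.le hb1' hn55 v (r v) hrv0 hrvk
    have hnum : (DRB.dM n k v u : ℝ) ^ (-(r v)) ≤ 1 :=
      Real.rpow_le_one_of_one_le_of_nonpos hd1 (by linarith)
    have h1 : DRB.linkProb n k v u (r v) ≤ 1 / DRB.cnorm n k v (r v) :=
      div_le_div_of_nonneg_right hnum hcv.le |>.trans_eq rfl
    have h2 : 1 / DRB.cnorm n k v (r v) ≤ 1 / (ξm * (n:ℝ)^γ / 4) :=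
      one_div_le_one_div_of_le (by positivity) hclow
    have h3 : 1 / (ξm * (n:ℝ)^γ / 4) = 4 / (ξm * (n:ℝ)^γ) := by
      field_simp
    have h4 : (0:ℝ) ≤ (DRB.dM n k u v : ℝ) ^ (-(k : ℝ)) / ξm := by positivity
    calc DRB.linkProb n k v u (r v) ≤ 1 / DRB.cnorm n k v (r v) := h1
      _ ≤ 4 / (ξm * (n:ℝ)^γ) := h2.trans_eq h3
      _ ≤ _ := by linarith
  · -- high class : r v ≥ k
    have hrvk : (k:ℝ) ≤ r v := by
      have hm'' : k * g ≤ m' := by omega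
      rw [hm']
      have hc : ((k * g : ℕ) : ℝ) ≤ (m' : ℝ) := by exact_mod_cast hm''
      have h3 : ((k:ℝ) * (g:ℝ)) * γ ≤ (m' : ℝ) * γ := by
        apply mul_le_mul_of_nonneg_right ?_ hγ0.le
        push_cast at hc; linarith
      rw [mul_assoc, hgγ, mul_one] at h3
      exact h3
    have hnum : (DRB.dM n k v u : ℝ) ^ (-(r v)) ≤ (DRB.dM n k v u : ℝ) ^ (-(k:ℝ)) :=
      Real.rpow_le_rpow_of_exponent_le hd1 (by linarith)
    have hch := chigh hk hb1' hn2 v (r v)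
    have h1 : DRB.linkProb n k v u (r v) ≤ (DRB.dM n k v u : ℝ) ^ (-(k:ℝ)) / ξm :=
      div_le_div₀ (Real.rpow_nonneg (by linarith) _) hnum hξm hch
    have h4 : (0:ℝ) ≤ 4 / (ξm * (n:ℝ)^γ) := by positivity
    rw [hdM] at h1
    linarith

end RecipLemmas

set_option maxHeartbeats 2000000

/-- Low-order payoff bound for strategies `≠ k`. With the counting
constants `ξ_k^-, ξ_k^+` for nodes at each distance level, for all
`n ≥ max(e^4, 2k)`, any node playing `r_u ≠ k` in any valid profile has payoff
at most `κ · n^{1-γ}`, with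
`κ = (ξ_k^+)^2 · 2^{2k+7} · k^{k+4} / (γ·(ξ_k^-)^3)`. -/
theorem low_order_payoff (k g : ℕ) (hk : 1 ≤ k) (hg : 2 ≤ g)
    (ξm ξp : ℝ) (hξm : 0 < ξm) (hξp : 0 < ξp)
    (hb1 : ∀ n : ℕ, ∀ u : DRB.Node n k, ∀ j : ℕ, 1 ≤ j → j ≤ n / 2 →
      ξm * (j : ℝ) ^ (k - 1) ≤ (DRB.countAt n k u j : ℝ) ∧
        (DRB.countAt n k u j : ℝ) ≤ ξp * (j : ℝ) ^ (k - 1))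
    (hb2 : ∀ n : ℕ, ∀ u : DRB.Node n k, ∀ j : ℕ, n / 2 < j → j ≤ k * (n / 2) →
      1 ≤ DRB.countAt n k u j ∧
        (DRB.countAt n k u j : ℝ) ≤ ξp * (j : ℝ) ^ (k - 1)) :
    ∀ n : ℕ, max (Real.exp 4) (2 * (k : ℝ)) ≤ (n : ℝ) →
      ∀ r : DRB.Node n k → ℝ, DRB.ValidProfile n k (g : ℝ)⁻¹ r →
        ∀ u : DRB.Node n k, r u ≠ (k : ℝ) →
          DRB.payoff n k r u ≤
            (ξp ^ 2 * 2 ^ (2 * k + 7) * (k : ℝ) ^ (k + 4) / ((g : ℝ)⁻¹ * ξm ^ 3)) *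
              (n : ℝ) ^ ((1 : ℝ) - (g : ℝ)⁻¹) := by
  classical
  intro n hn r hval u hru
  have hgR : (2:ℝ) ≤ (g:ℝ) := by exact_mod_cast hg
  have hg0 : (0:ℝ) < (g:ℝ) := by linarith
  have hkR : (1:ℝ) ≤ (k:ℝ) := by exact_mod_cast hk
  have hk0 : (0:ℝ) < (k:ℝ) := by linarith
  set γ : ℝ := (g:ℝ)⁻¹ with hγdef
  have hγ0 : 0 < γ := by rw [hγdef]; positivity
  have hγh : γ ≤ 1/2 := by
    rw [hγdef, show (1:ℝ)/2 = (2:ℝ)⁻¹ by norm_num]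
    exact inv_anti₀ (by norm_num) hgR
  have hγ1 : γ ≤ 1 := by linarith
  have hgγ : (g:ℝ) * γ = 1 := mul_inv_cancel₀ hg0.ne'
  have hexp : Real.exp 4 ≤ (n:ℝ) := le_trans (le_max_left _ _) hn
  have hknR : 2*(k:ℝ) ≤ (n:ℝ) := le_trans (le_max_right _ _) hn
  have h54 : (54:ℝ) < (n:ℝ) := by
    have h1 : (2.7182818283:ℝ) < Real.exp 1 := Real.exp_one_gt_d9
    have h2 : Real.exp 4 = (Real.exp 1)^(4:ℕ) := by
      rw [← Real.exp_nat_mul]; norm_num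
    have ha : (2.7182818283:ℝ)^(4:ℕ) ≤ (Real.exp 1)^(4:ℕ) :=
      pow_le_pow_left₀ (by norm_num) h1.le 4
    have hb : (54:ℝ) < (2.7182818283:ℝ)^(4:ℕ) := by norm_num
    linarith
  have hn55 : 55 ≤ n := by
    have : (54:ℕ) < n := by exact_mod_cast h54
    omega
  have hn2 : 2 ≤ n := by omega
  have hnR0 : (0:ℝ) < (n:ℝ) := by
    have : (0:ℕ) < n := by omega
    exact_mod_cast this
  have hnR1 : (1:ℝ) ≤ (n:ℝ) := by
    have : (1:ℕ) ≤ n := by omega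
    exact_mod_cast this
  set A : ℝ := (n:ℝ)^γ with hAdef
  set X : ℝ := (n:ℝ)^((1:ℝ)-γ) with hXdef
  have hA0 : 0 < A := Real.rpow_pos_of_pos hnR0 _
  have hX0 : 0 < X := Real.rpow_pos_of_pos hnR0 _
  have hXA : X * A = (n:ℝ) := by
    rw [hXdef, hAdef, ← Real.rpow_add hnR0, sub_add_cancel, Real.rpow_one]
  have hb1' : ∀ n' : ℕ, ∀ u' : DRB.Node n' k, ∀ j : ℕ, 1 ≤ j → j ≤ n' / 2 →
      ξm * (j : ℝ) ^ (k - 1) ≤ (DRB.countAt n' k u' j : ℝ) :=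
    fun n' u' j h1 h2 => (hb1 n' u' j h1 h2).1
  have hmp : ξm ≤ ξp := by
    have h := hb1 n u 1 le_rfl (by omega)
    simp only [Nat.cast_one, one_pow, mul_one] at h
    exact le_trans h.1 h.2
  have hm2 : ξm ≤ 2^(k+1) := by
    have h := (hb1 4 (fun _ => (2 : Fin 4)) 2 (by norm_num) (by norm_num)).1
    have hcard : (DRB.countAt 4 k (fun _ => (2:Fin 4)) 2 : ℝ) ≤ (4:ℝ)^k := by
      have hc : DRB.countAt 4 k (fun _ => (2:Fin 4)) 2 ≤ 4^k := by
        unfold DRB.countAt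
        refine le_trans (Finset.card_filter_le _ _) ?_
        rw [Finset.card_univ, card_node]
      exact_mod_cast hc
    have e4 : (4:ℝ)^k = 2^(k+1) * 2^(k-1) := by
      rw [show (4:ℝ) = 2^2 by norm_num, ← pow_mul, ← pow_add]
      congr 1; omega
    have h2 : (0:ℝ) < (2:ℝ)^(k-1) := by positivity
    have h3 : ξm * (2:ℝ)^(k-1) ≤ 2^(k+1) * 2^(k-1) := by
      rw [← e4]
      calc ξm * (2:ℝ)^(k-1) = ξm * ((2:ℕ):ℝ)^(k-1) := by norm_num
        _ ≤ _ := le_trans h hcard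
    exact le_of_mul_le_mul_right h3 h2
  have hnD1 : 1 ≤ k * (n/2) := Nat.mul_pos (by omega) (by omega)
  have hbU : ∀ j ∈ Finset.Icc 1 (k*(n/2)), (DRB.countAt n k u j : ℝ) ≤ ξp * (j:ℝ)^(k-1) := by
    intro j hj
    obtain ⟨hj1, hjD⟩ := Finset.mem_Icc.mp hj
    rcases le_or_gt j (n/2) with hle | hgt
    · exact (hb1 n u j hj1 hle).2
    · exact (hb2 n u j hgt hjD).2
  have hcpos : 0 < DRB.cnorm n k u (r u) := cnorm_pos hn2 hk u (r u)
  have hnDle : ((k*(n/2) : ℕ):ℝ) ≤ (k:ℝ)*(n:ℝ)/2 := by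
    push_cast
    calc (k:ℝ) * ((n/2 : ℕ):ℝ) ≤ (k:ℝ) * ((n:ℝ)/2) := by
          apply mul_le_mul_of_nonneg_left ?_ (by positivity)
          calc ((n/2 : ℕ):ℝ) ≤ (n:ℝ)/((2:ℕ):ℝ) := Nat.cast_div_le
            _ = (n:ℝ)/2 := by norm_num
      _ = (k:ℝ)*(n:ℝ)/2 := by ring
  obtain ⟨m, hm⟩ := hval u
  have hs0 : 0 ≤ r u := by rw [hm]; positivity
  have hmkg : m ≠ k * g := by
    intro he
    apply hru
    rw [hm, he]
    push_cast
    rw [mul_assoc, hgγ, mul_one]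
  set C : ℝ := 2*(k:ℝ)/ξm + 4*(k:ℝ)*(g:ℝ)*ξp/ξm^2 + (g:ℝ)*ξp*(k:ℝ)^2/ξm + 2*(k:ℝ)*ξp/ξm
    with hCdef
  have hC1 : (0:ℝ) ≤ 2*(k:ℝ)/ξm := by positivity
  have hC2 : (0:ℝ) ≤ 4*(k:ℝ)*(g:ℝ)*ξp/ξm^2 := by positivity
  have hC3 : (0:ℝ) ≤ (g:ℝ)*ξp*(k:ℝ)^2/ξm := by positivity
  have hC4 : (0:ℝ) ≤ 2*(k:ℝ)*ξp/ξm := by positivity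
  -- shared recip bound for the low-exponent cases
  have hrecA : DRB.recip n k r u ≤ 4/(ξm*A) +
      ξp * (∑ j ∈ Finset.Icc 1 (k*(n/2)), (j:ℝ)^(-1-(r u))) /
        (DRB.cnorm n k u (r u) * ξm) := by
    have hpv : ∀ v ∈ DRB.others n k u, DRB.linkProb n k v u (r v) ≤
        4/(ξm*A) + (DRB.dM n k u v:ℝ)^(-(k:ℝ))/ξm := by
      intro v hv
      have := pvu_bound hk hg hξm hb1' hn55 r hval u v hv
      rw [hAdef, hγdef]
      exact this
    have step1 : DRB.recip n k r u ≤
        ∑ v ∈ DRB.others n k u, DRB.linkProb n k u v (r u) *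
          (4/(ξm*A) + (DRB.dM n k u v:ℝ)^(-(k:ℝ))/ξm) := by
      refine Finset.sum_le_sum fun v hv => ?_
      exact mul_le_mul_of_nonneg_left (hpv v hv) (linkProb_nonneg _ _ _)
    have step2 : ∑ v ∈ DRB.others n k u, DRB.linkProb n k u v (r u) *
          (4/(ξm*A) + (DRB.dM n k u v:ℝ)^(-(k:ℝ))/ξm)
        = 4/(ξm*A) +
          (∑ v ∈ DRB.others n k u, DRB.linkProb n k u v (r u) * (DRB.dM n k u v:ℝ)^(-(k:ℝ)))/ξm := by
      rw [Finset.sum_congr rfl (fun v _ => by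
        show DRB.linkProb n k u v (r u) * (4/(ξm*A) + (DRB.dM n k u v:ℝ)^(-(k:ℝ))/ξm)
          = DRB.linkProb n k u v (r u) * (4/(ξm*A)) +
            DRB.linkProb n k u v (r u) * (DRB.dM n k u v:ℝ)^(-(k:ℝ))/ξm
        ring)]
      rw [Finset.sum_add_distrib, ← Finset.sum_mul, ← Finset.sum_div,
        sum_linkProb hn2 hk u (r u), one_mul]
    have step3 : ∑ v ∈ DRB.others n k u, DRB.linkProb n k u v (r u) * (DRB.dM n k u v:ℝ)^(-(k:ℝ))
        = (∑ j ∈ Finset.Icc 1 (k*(n/2)), (DRB.countAt n k u j:ℝ) * (j:ℝ)^(-(r u) + -(k:ℝ)))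
          / DRB.cnorm n k u (r u) := by
      rw [Finset.sum_congr rfl (fun v hv => by
        have hd0 : (0:ℝ) < (DRB.dM n k u v : ℝ) := by
          have := one_le_dM (mem_others_iff.mp hv)
          have : (1:ℝ) ≤ (DRB.dM n k u v : ℝ) := by exact_mod_cast this
          linarith
        show DRB.linkProb n k u v (r u) * (DRB.dM n k u v:ℝ)^(-(k:ℝ))
          = (DRB.dM n k u v:ℝ)^(-(r u) + -(k:ℝ)) / DRB.cnorm n k u (r u)
        rw [DRB.linkProb, Real.rpow_add hd0]
        ring)]
      rw [← Finset.sum_div, sum_others_eq u (fun j => (j:ℝ)^(-(r u) + -(k:ℝ)))]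
    have step4 : (∑ j ∈ Finset.Icc 1 (k*(n/2)), (DRB.countAt n k u j:ℝ) * (j:ℝ)^(-(r u) + -(k:ℝ)))
        ≤ ξp * ∑ j ∈ Finset.Icc 1 (k*(n/2)), (j:ℝ)^(-1-(r u)) := by
      rw [Finset.mul_sum]
      refine Finset.sum_le_sum fun j hj => ?_
      obtain ⟨hj1, hjD⟩ := Finset.mem_Icc.mp hj
      have hj1R : (1:ℝ) ≤ (j:ℝ) := by exact_mod_cast hj1
      have hj0 : (0:ℝ) < (j:ℝ) := by linarith
      have e1 : (j:ℝ)^(k-1:ℕ) * (j:ℝ)^(-(r u) + -(k:ℝ)) = (j:ℝ)^(-1-(r u)) := by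
        rw [← Real.rpow_natCast (j:ℝ) (k-1), ← Real.rpow_add hj0]
        congr 1
        push_cast [Nat.cast_sub hk]
        ring
      calc (DRB.countAt n k u j:ℝ) * (j:ℝ)^(-(r u) + -(k:ℝ))
          ≤ (ξp * (j:ℝ)^(k-1:ℕ)) * (j:ℝ)^(-(r u) + -(k:ℝ)) :=
            mul_le_mul_of_nonneg_right (hbU j hj) (Real.rpow_nonneg hj0.le _)
        _ = ξp * ((j:ℝ)^(k-1:ℕ) * (j:ℝ)^(-(r u) + -(k:ℝ))) := by ring
        _ = ξp * (j:ℝ)^(-1-(r u)) := by rw [e1]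
    calc DRB.recip n k r u
        ≤ 4/(ξm*A) +
          (∑ v ∈ DRB.others n k u, DRB.linkProb n k u v (r u) * (DRB.dM n k u v:ℝ)^(-(k:ℝ)))/ξm := by
          rw [← step2]; exact step1
      _ ≤ 4/(ξm*A) +
          ξp * (∑ j ∈ Finset.Icc 1 (k*(n/2)), (j:ℝ)^(-1-(r u))) /
            (DRB.cnorm n k u (r u) * ξm) := by
          rw [step3]
          have e : (∑ j ∈ Finset.Icc 1 (k*(n/2)), (DRB.countAt n k u j:ℝ) * (j:ℝ)^(-(r u) + -(k:ℝ)))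
                / DRB.cnorm n k u (r u) / ξm
              = (∑ j ∈ Finset.Icc 1 (k*(n/2)), (DRB.countAt n k u j:ℝ) * (j:ℝ)^(-(r u) + -(k:ℝ)))
                / (DRB.cnorm n k u (r u) * ξm) := by
            rw [div_div]
          rw [e]
          have h2 : (0:ℝ) < DRB.cnorm n k u (r u) * ξm := mul_pos hcpos hξm
          exact add_le_add (le_refl _) (div_le_div_of_nonneg_right step4 h2.le)
  -- payoff ≤ (k n / 2) * recip-bound
  have hpay : ∀ RB : ℝ, DRB.recip n k r u ≤ RB → 0 ≤ RB →
      DRB.payoff n k r u ≤ ((k:ℝ)*(n:ℝ)/2) * RB := by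
    intro RB hRB hRB0
    calc DRB.payoff n k r u = DRB.linkDist n k u (r u) * DRB.recip n k r u := rfl
      _ ≤ ((k:ℝ)*(n:ℝ)/2) * RB := by
          apply mul_le_mul ((linkDist_le hn2 hk u (r u)).trans hnDle) hRB
            (recip_nonneg r u) (by positivity)
  have main : DRB.payoff n k r u ≤ C * X := by
    have hkg1 : 1 ≤ k*g := Nat.mul_pos (by omega) (by omega)
    have hmcases : m = 0 ∨ (1 ≤ m ∧ m ≤ k*g - 1) ∨ k*g + 1 ≤ m := by omega
    rcases hmcases with hm0 | ⟨hm1, hmle⟩ | hmB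
    · -- Case A2 : r u = 0
      have hs_eq : r u = 0 := by rw [hm, hm0]; simp
      have hc0 : (n:ℝ)^k/2 ≤ DRB.cnorm n k u (r u) := by
        rw [hs_eq]
        have hcc : DRB.cnorm n k u 0 = ((DRB.others n k u).card : ℝ) := by
          unfold DRB.cnorm
          rw [Finset.sum_congr rfl (fun v _ => by rw [neg_zero, Real.rpow_zero])]
          rw [Finset.sum_const, nsmul_eq_mul, mul_one]
        have hcard : (DRB.others n k u).card = n^k - 1 := by
          unfold DRB.others
          rw [Finset.filter_ne', Finset.card_erase_of_mem (Finset.mem_univ u),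
            Finset.card_univ, card_node]
        have hnk2 : (2:ℝ) ≤ (n:ℝ)^k := by
          calc (2:ℝ) ≤ (n:ℝ) := by linarith
            _ = (n:ℝ)^1 := (pow_one _).symm
            _ ≤ (n:ℝ)^k := pow_le_pow_right₀ hnR1 hk
        have h1k : 1 ≤ n^k := Nat.one_le_pow _ _ (by omega)
        rw [hcc, hcard]
        push_cast [Nat.cast_sub h1k]
        linarith
      have hnDkn : ((k*(n/2):ℕ):ℝ) ≤ (k:ℝ)*(n:ℝ) := by
        have : k*(n/2) ≤ k*n := Nat.mul_le_mul_left k (Nat.div_le_self n 2)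
        exact_mod_cast this
      have hTb : (∑ j ∈ Finset.Icc 1 (k*(n/2)), (j:ℝ)^(-1-(r u))) ≤ (g:ℝ)*((k:ℝ)*A) := by
        have h1 : ∀ j ∈ Finset.Icc 1 (k*(n/2)), (j:ℝ)^(-1-(r u)) ≤ (j:ℝ)^(γ-1) := by
          intro j hj
          have hj1R : (1:ℝ) ≤ (j:ℝ) := by exact_mod_cast (Finset.mem_Icc.mp hj).1
          apply Real.rpow_le_rpow_of_exponent_le hj1R
          rw [hs_eq]; linarith
        have h2 : ((k*(n/2):ℕ):ℝ)^γ ≤ ((k:ℝ)*(n:ℝ))^γ :=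
          Real.rpow_le_rpow (Nat.cast_nonneg _) hnDkn hγ0.le
        have h3 : ((k:ℝ)*(n:ℝ))^γ = (k:ℝ)^γ * A := by
          rw [hAdef]; exact Real.mul_rpow hk0.le hnR0.le
        have h4 : (k:ℝ)^γ ≤ (k:ℝ) := by
          calc (k:ℝ)^γ ≤ (k:ℝ)^(1:ℝ) := Real.rpow_le_rpow_of_exponent_le hkR hγ1
            _ = (k:ℝ) := Real.rpow_one _
        have h5 : ((k*(n/2):ℕ):ℝ)^γ ≤ (k:ℝ)*A := by
          rw [h3] at h2
          calc ((k*(n/2):ℕ):ℝ)^γ ≤ (k:ℝ)^γ * A := h2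
            _ ≤ (k:ℝ)*A := mul_le_mul_of_nonneg_right h4 hA0.le
        calc (∑ j ∈ Finset.Icc 1 (k*(n/2)), (j:ℝ)^(-1-(r u)))
            ≤ ∑ j ∈ Finset.Icc 1 (k*(n/2)), (j:ℝ)^(γ-1) := Finset.sum_le_sum h1
          _ ≤ ((k*(n/2):ℕ):ℝ)^γ/γ := DRBAux2.S1 hγ0 hγ1 _
          _ = ((k*(n/2):ℕ):ℝ)^γ * (g:ℝ) := by rw [hγdef, div_eq_mul_inv, inv_inv]
          _ ≤ ((k:ℝ)*A) * (g:ℝ) := mul_le_mul_of_nonneg_right h5 hg0.le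
          _ = (g:ℝ)*((k:ℝ)*A) := by ring
      have hrec2 : DRB.recip n k r u ≤
          4/(ξm*A) + ξp*((g:ℝ)*((k:ℝ)*A))/(((n:ℝ)^k/2)*ξm) := by
        refine hrecA.trans (add_le_add (le_refl _) ?_)
        exact div_le_div₀ (by positivity) (mul_le_mul_of_nonneg_left hTb hξp.le)
          (by positivity) (mul_le_mul_of_nonneg_right hc0 hξm.le)
      have hfin := hpay _ hrec2 (by positivity)
      have hnA : (n:ℝ)*A ≤ X*(n:ℝ)^k := by
        have e1 : (n:ℝ)^k = (n:ℝ)^((k:ℕ):ℝ) := (Real.rpow_natCast _ _).symm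
        have e2 : (n:ℝ)*A = (n:ℝ)^((1:ℝ)+γ) := by
          rw [hAdef, Real.rpow_add hnR0, Real.rpow_one]
        have e3 : X*(n:ℝ)^((k:ℕ):ℝ) = (n:ℝ)^((1:ℝ)-γ+((k:ℕ):ℝ)) := by
          rw [hXdef, ← Real.rpow_add hnR0]
        rw [e2, e1, e3]
        apply Real.rpow_le_rpow_of_exponent_le hnR1
        push_cast
        linarith
      have hterm2 : ((k:ℝ)*(n:ℝ)/2) * (ξp*((g:ℝ)*((k:ℝ)*A))/(((n:ℝ)^k/2)*ξm))
          ≤ ((g:ℝ)*ξp*(k:ℝ)^2/ξm)*X := by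
        have hnk0 : (0:ℝ) < (n:ℝ)^k := by positivity
        have e : ((k:ℝ)*(n:ℝ)/2) * (ξp*((g:ℝ)*((k:ℝ)*A))/(((n:ℝ)^k/2)*ξm))
            = ((g:ℝ)*ξp*(k:ℝ)^2/ξm) * ((n:ℝ)*A/(n:ℝ)^k) := by
          field_simp
        rw [e]
        apply mul_le_mul_of_nonneg_left ?_ (by positivity)
        exact (div_le_iff₀ hnk0).mpr hnA
      have hterm1 : ((k:ℝ)*(n:ℝ)/2) * (4/(ξm*A)) = (2*(k:ℝ)/ξm)*X := by
        rw [← hXA]; field_simp; ring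
      calc DRB.payoff n k r u
          ≤ ((k:ℝ)*(n:ℝ)/2) * (4/(ξm*A) + ξp*((g:ℝ)*((k:ℝ)*A))/(((n:ℝ)^k/2)*ξm)) := hfin
        _ = ((k:ℝ)*(n:ℝ)/2) * (4/(ξm*A))
            + ((k:ℝ)*(n:ℝ)/2) * (ξp*((g:ℝ)*((k:ℝ)*A))/(((n:ℝ)^k/2)*ξm)) := by ring
        _ ≤ (2*(k:ℝ)/ξm)*X + ((g:ℝ)*ξp*(k:ℝ)^2/ξm)*X := by
            rw [hterm1]; exact add_le_add (le_refl _) hterm2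
        _ ≤ C * X := by
            have e : (2*(k:ℝ)/ξm)*X + ((g:ℝ)*ξp*(k:ℝ)^2/ξm)*X
                = (2*(k:ℝ)/ξm + (g:ℝ)*ξp*(k:ℝ)^2/ξm)*X := by ring
            rw [e]
            apply mul_le_mul_of_nonneg_right ?_ hX0.le
            rw [hCdef]; linarith
    · -- Case A1 : γ ≤ r u ≤ k - γ
      have hsA : r u ≤ (k:ℝ) - γ := by
        rw [hm]
        have hc : (m:ℝ) ≤ ((k*g - 1 : ℕ):ℝ) := by exact_mod_cast hmle
        have hc2 : ((k*g-1:ℕ):ℝ) = (k:ℝ)*(g:ℝ) - 1 := by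
          push_cast [Nat.cast_sub hkg1]
          ring
        have h3 : (m:ℝ)*γ ≤ ((k:ℝ)*(g:ℝ)-1)*γ :=
          mul_le_mul_of_nonneg_right (by rw [← hc2]; exact hc) hγ0.le
        have h4 : ((k:ℝ)*(g:ℝ)-1)*γ = (k:ℝ)-γ := by
          rw [sub_mul, one_mul, mul_assoc, hgγ, mul_one]
        linarith
      have hclow : ξm * A / 4 ≤ DRB.cnorm n k u (r u) := by
        rw [hAdef, hγdef]
        exact clow hk hg hξm.le hb1' hn55 u (r u) hs0 (by rw [← hγdef]; exact hsA)
      have hsγ : γ ≤ r u := by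
        rw [hm]
        have h1 : (1:ℝ) ≤ (m:ℝ) := by exact_mod_cast hm1
        nlinarith
      have hTb : (∑ j ∈ Finset.Icc 1 (k*(n/2)), (j:ℝ)^(-1-(r u))) ≤ 2*(g:ℝ) := by
        have h1 : ∀ j ∈ Finset.Icc 1 (k*(n/2)), (j:ℝ)^(-1-(r u)) ≤ (j:ℝ)^(-1-γ) := by
          intro j hj
          have hj1R : (1:ℝ) ≤ (j:ℝ) := by exact_mod_cast (Finset.mem_Icc.mp hj).1
          exact Real.rpow_le_rpow_of_exponent_le hj1R (by linarith)
        calc (∑ j ∈ Finset.Icc 1 (k*(n/2)), (j:ℝ)^(-1-(r u)))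
            ≤ ∑ j ∈ Finset.Icc 1 (k*(n/2)), (j:ℝ)^(-1-γ) := Finset.sum_le_sum h1
          _ ≤ 1 + 1/γ := DRBAux2.S3 hγ0 hγ1 _
          _ = 1 + (g:ℝ) := by rw [hγdef, one_div, inv_inv]
          _ ≤ 2*(g:ℝ) := by linarith
      have hrec2 : DRB.recip n k r u ≤ 4/(ξm*A) + ξp*(2*(g:ℝ))/((ξm*A/4)*ξm) := by
        refine hrecA.trans (add_le_add (le_refl _) ?_)
        exact div_le_div₀ (by positivity) (mul_le_mul_of_nonneg_left hTb hξp.le)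
          (by positivity) (mul_le_mul_of_nonneg_right hclow hξm.le)
      have hfin := hpay _ hrec2 (by positivity)
      have e : ((k:ℝ)*(n:ℝ)/2) * (4/(ξm*A) + ξp*(2*(g:ℝ))/((ξm*A/4)*ξm))
          = (2*(k:ℝ)/ξm + 4*(k:ℝ)*(g:ℝ)*ξp/ξm^2) * X := by
        rw [← hXA]; field_simp; ring
      rw [e] at hfin
      calc DRB.payoff n k r u ≤ (2*(k:ℝ)/ξm + 4*(k:ℝ)*(g:ℝ)*ξp/ξm^2) * X := hfin
        _ ≤ C * X := by
            apply mul_le_mul_of_nonneg_right ?_ hX0.le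
            rw [hCdef]; linarith
    · -- Case B : r u ≥ k + γ
      have hsB : (k:ℝ) + γ ≤ r u := by
        rw [hm]
        have hc : ((k*g+1:ℕ):ℝ) ≤ (m:ℝ) := by exact_mod_cast hmB
        have h3 : ((k*g+1:ℕ):ℝ)*γ ≤ (m:ℝ)*γ := mul_le_mul_of_nonneg_right hc hγ0.le
        have e : ((k*g+1:ℕ):ℝ)*γ = (k:ℝ)+γ := by
          push_cast
          rw [add_mul, one_mul, mul_assoc, hgγ, mul_one]
        linarith
      have hrec1 : DRB.recip n k r u ≤ 1 := by
        calc DRB.recip n k r u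
            ≤ ∑ v ∈ DRB.others n k u, DRB.linkProb n k u v (r u) * 1 := by
              refine Finset.sum_le_sum fun v hv => ?_
              exact mul_le_mul_of_nonneg_left
                (linkProb_le_one hn2 hk (Ne.symm (mem_others_iff.mp hv)) (r v))
                (linkProb_nonneg _ _ _)
          _ = 1 := by
              simp only [mul_one]
              exact sum_linkProb hn2 hk u (r u)
      have hnDkn : ((k*(n/2):ℕ):ℝ) ≤ (k:ℝ)*(n:ℝ) := by
        have : k*(n/2) ≤ k*n := Nat.mul_le_mul_left k (Nat.div_le_self n 2)
        exact_mod_cast this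
      have hD : DRB.linkDist n k u (r u) ≤ ξp*(2*((k:ℝ)*X))/ξm := by
        rw [linkDist_eq]
        have hstep : ∀ j ∈ Finset.Icc 1 (k*(n/2)),
            (DRB.countAt n k u j:ℝ) * ((j:ℝ)^(-(r u))/DRB.cnorm n k u (r u) * (j:ℝ))
            ≤ ξp * (j:ℝ)^((1-γ)-1) / DRB.cnorm n k u (r u) := by
          intro j hj
          have hj1R : (1:ℝ) ≤ (j:ℝ) := by exact_mod_cast (Finset.mem_Icc.mp hj).1
          have hj0 : (0:ℝ) < (j:ℝ) := by linarith
          have e1 : (j:ℝ)^(-(r u)) * (j:ℝ) = (j:ℝ)^(-(r u)+1) := by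
            rw [Real.rpow_add hj0, Real.rpow_one]
          have e2 : (j:ℝ)^(k-1:ℕ) * (j:ℝ)^(-(r u)+1) = (j:ℝ)^(((k-1:ℕ):ℝ) + (-(r u)+1)) := by
            rw [← Real.rpow_natCast (j:ℝ) (k-1), ← Real.rpow_add hj0]
          have e3 : (j:ℝ)^(((k-1:ℕ):ℝ) + (-(r u)+1)) ≤ (j:ℝ)^((1-γ)-1) := by
            apply Real.rpow_le_rpow_of_exponent_le hj1R
            push_cast [Nat.cast_sub hk]
            linarith
          have hnum : (DRB.countAt n k u j:ℝ) * ((j:ℝ)^(-(r u)) * (j:ℝ))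
              ≤ ξp * (j:ℝ)^((1-γ)-1) := by
            calc (DRB.countAt n k u j:ℝ) * ((j:ℝ)^(-(r u)) * (j:ℝ))
                ≤ (ξp * (j:ℝ)^(k-1:ℕ)) * ((j:ℝ)^(-(r u)) * (j:ℝ)) :=
                  mul_le_mul_of_nonneg_right (hbU j hj) (by positivity)
              _ = ξp * ((j:ℝ)^(k-1:ℕ) * (j:ℝ)^(-(r u)+1)) := by rw [← e1]; ring
              _ ≤ ξp * (j:ℝ)^((1-γ)-1) := by
                  rw [e2]; exact mul_le_mul_of_nonneg_left e3 hξp.le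
          calc (DRB.countAt n k u j:ℝ) * ((j:ℝ)^(-(r u))/DRB.cnorm n k u (r u) * (j:ℝ))
              = (DRB.countAt n k u j:ℝ) * ((j:ℝ)^(-(r u)) * (j:ℝ)) / DRB.cnorm n k u (r u) := by
                ring
            _ ≤ ξp * (j:ℝ)^((1-γ)-1) / DRB.cnorm n k u (r u) :=
                div_le_div_of_nonneg_right hnum hcpos.le
        have hg1' : (0:ℝ) < 1 - γ := by linarith
        have hsum1 : (∑ j ∈ Finset.Icc 1 (k*(n/2)), (j:ℝ)^((1-γ)-1))
            ≤ ((k*(n/2):ℕ):ℝ)^(1-γ)/(1-γ) := DRBAux2.S1 hg1' (by linarith) _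
        have hX' : ((k*(n/2):ℕ):ℝ)^(1-γ) ≤ (k:ℝ)*X := by
          calc ((k*(n/2):ℕ):ℝ)^(1-γ) ≤ ((k:ℝ)*(n:ℝ))^(1-γ) :=
              Real.rpow_le_rpow (Nat.cast_nonneg _) hnDkn hg1'.le
            _ = (k:ℝ)^((1:ℝ)-γ) * X := by
                rw [hXdef]; exact Real.mul_rpow hk0.le hnR0.le
            _ ≤ (k:ℝ)*X := by
                apply mul_le_mul_of_nonneg_right ?_ hX0.le
                calc (k:ℝ)^((1:ℝ)-γ) ≤ (k:ℝ)^(1:ℝ) :=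
                    Real.rpow_le_rpow_of_exponent_le hkR (by linarith)
                  _ = (k:ℝ) := Real.rpow_one _
        have hsum2 : ((k*(n/2):ℕ):ℝ)^(1-γ)/(1-γ) ≤ 2*((k:ℝ)*X) := by
          rw [div_le_iff₀ hg1']
          nlinarith [hX', hX0, hk0, hγh, mul_pos hk0 hX0]
        calc (∑ j ∈ Finset.Icc 1 (k*(n/2)),
              (DRB.countAt n k u j:ℝ) * ((j:ℝ)^(-(r u))/DRB.cnorm n k u (r u) * (j:ℝ)))
            ≤ ∑ j ∈ Finset.Icc 1 (k*(n/2)), ξp * (j:ℝ)^((1-γ)-1) / DRB.cnorm n k u (r u) :=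
              Finset.sum_le_sum hstep
          _ = ξp * (∑ j ∈ Finset.Icc 1 (k*(n/2)), (j:ℝ)^((1-γ)-1)) / DRB.cnorm n k u (r u) := by
              rw [← Finset.sum_div, ← Finset.mul_sum]
          _ ≤ ξp*(2*((k:ℝ)*X))/ξm := by
              apply div_le_div₀ (by positivity) ?_ hξm (chigh hk hb1' hn2 u (r u))
              exact mul_le_mul_of_nonneg_left (hsum1.trans hsum2) hξp.le
      calc DRB.payoff n k r u
          ≤ DRB.linkDist n k u (r u) * 1 :=
            mul_le_mul_of_nonneg_left hrec1 (linkDist_nonneg u (r u))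
        _ = DRB.linkDist n k u (r u) := mul_one _
        _ ≤ ξp*(2*((k:ℝ)*X))/ξm := hD
        _ ≤ C * X := by
            have e : ξp*(2*((k:ℝ)*X))/ξm = (2*(k:ℝ)*ξp/ξm)*X := by ring
            rw [e]
            apply mul_le_mul_of_nonneg_right ?_ hX0.le
            rw [hCdef]; linarith
  calc DRB.payoff n k r u ≤ C * X := main
    _ ≤ ξp ^ 2 * 2 ^ (2 * k + 7) * (k : ℝ) ^ (k + 4) / (γ * ξm ^ 3) * X := by
        apply mul_le_mul_of_nonneg_right ?_ hX0.le
        rw [hCdef, hγdef]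
        exact const_bound k g hk hg hξm hξp hmp hm2
end
end

section
/- For the DRB game on the k-dimensional grid, suppose ξ_k^− and ξ_k^+ are positive constants depending only on k such that ξ_k^− j^{k−1} ≤ b_u(j) ≤ ξ_k^+ j^{k−1} for all 1 ≤ j ≤ ⌊n/2⌋ and 1 ≤ b_u(j) ≤ ξ_k^+ j^{k−1} for ⌊n/2⌋ < j ≤ n_D, where b_u(j) is the number of nodes at grid distance exactly j from u. Then for sufficiently large n, in the navigable profile r ≡ k every node u satisfies ((ξ_k^−)^2/(2(ξ_k^+)^3)) · n/(ln(2kn))^3 ≤ π_u(r ≡ k) ≤ (16(ξ_k^+)^2/(ξ_k^−)^3) · n/(ln n)^3. -/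
open Finset

noncomputable section

namespace DRBAux

open DRB Finset Nat

/-- per-coordinate cyclic distance -/
def cyc (n : ℕ) (a b : Fin n) : ℕ :=
  min ((a : ℤ) - (b : ℤ)).natAbs (n - ((a : ℤ) - (b : ℤ)).natAbs)

lemma dM_eq (n k : ℕ) (u v : Node n k) : dM n k u v = ∑ i, cyc n (u i) (v i) := rfl

lemma cyc_le (n : ℕ) (a b : Fin n) : cyc n a b ≤ n / 2 := by
  have ha := a.isLt; have hb := b.isLt
  unfold cyc; omega

lemma cyc_pos (n : ℕ) (a b : Fin n) (h : a ≠ b) : 1 ≤ cyc n a b := by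
  have ha := a.isLt; have hb := b.isLt
  have h' : a.val ≠ b.val := fun hh => h (Fin.ext hh)
  unfold cyc; omega

lemma cyc_self (n : ℕ) (a : Fin n) : cyc n a a = 0 := by
  unfold cyc; simp

lemma dM_comm (n k : ℕ) (u v : Node n k) : dM n k u v = dM n k v u := by
  unfold dM
  refine Finset.sum_congr rfl fun i _ => ?_
  rw [show ((u i : ℤ) - (v i : ℤ)).natAbs = ((v i : ℤ) - (u i : ℤ)).natAbs by
    rw [← Int.natAbs_neg, neg_sub]]

lemma dM_pos (n k : ℕ) (u v : Node n k) (h : v ≠ u) : 1 ≤ dM n k u v := by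
  obtain ⟨i, hi⟩ := Function.ne_iff.mp h
  rw [dM_eq]
  calc 1 ≤ cyc n (u i) (v i) := cyc_pos n _ _ (Ne.symm hi)
    _ ≤ ∑ i, cyc n (u i) (v i) :=
      Finset.single_le_sum (f := fun i => cyc n (u i) (v i))
        (fun _ _ => Nat.zero_le _) (Finset.mem_univ i)

lemma dM_le (n k : ℕ) (u v : Node n k) : dM n k u v ≤ k * (n / 2) := by
  rw [dM_eq]
  calc ∑ i, cyc n (u i) (v i) ≤ ∑ _i : Fin k, n / 2 :=
        Finset.sum_le_sum fun i _ => cyc_le n _ _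
    _ = k * (n / 2) := by simp [Finset.sum_const, mul_comm]

lemma sum_others_eq (n k : ℕ) (u : Node n k) (f : ℕ → ℝ) :
    ∑ v ∈ others n k u, f (dM n k u v)
      = ∑ j ∈ Finset.Icc 1 (k * (n / 2)), (countAt n k u j : ℝ) * f j := by
  have hmap : ∀ v ∈ others n k u, dM n k u v ∈ Finset.Icc 1 (k * (n / 2)) := by
    intro v hv
    have hne : v ≠ u := by simpa [others] using hv
    exact Finset.mem_Icc.mpr ⟨dM_pos n k u v hne, dM_le n k u v⟩
  rw [← Finset.sum_fiberwise_of_maps_to hmap (fun v => f (dM n k u v))]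
  refine Finset.sum_congr rfl fun j hj => ?_
  have hcard : ((others n k u).filter (fun v => dM n k u v = j)) =
      Finset.univ.filter (fun v => v ≠ u ∧ dM n k u v = j) := by
    ext v; simp [others, Finset.mem_filter, and_assoc]
  rw [Finset.sum_congr rfl (fun v hv => by
      rw [(Finset.mem_filter.mp hv).2]),
    Finset.sum_const, nsmul_eq_mul, hcard]
  rfl

lemma multiset_card_sum {α β : Type*} (s : Finset α) (f : α → Multiset β) :
    Multiset.card (∑ i ∈ s, f i) = ∑ i ∈ s, Multiset.card (f i) := by
  classical
  induction s using Finset.induction_on with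
  | empty => simp
  | insert _ _ h ih => rw [Finset.sum_insert h, Finset.sum_insert h, Multiset.card_add, ih]

lemma two_pow_le_four_factorial : ∀ k : ℕ, 2 ^ k ≤ 4 * (k - 1)!
  | 0 => by norm_num
  | 1 => by norm_num [Nat.factorial]
  | 2 => by norm_num [Nat.factorial]
  | (k+3) => by
    have ih := two_pow_le_four_factorial (k+2)
    have h1 : (k + 3 - 1)! = (k+2) * (k + 2 - 1)! := by
      show (k+2)! = (k+2) * (k+1)!
      rw [Nat.factorial_succ]
    calc 2 ^ (k+3) = 2 * 2 ^ (k+2) := by ring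
      _ ≤ 2 * (4 * (k + 2 - 1)!) := Nat.mul_le_mul_left 2 ih
      _ ≤ (k+2) * (4 * (k + 2 - 1)!) := Nat.mul_le_mul_right _ (by omega)
      _ = 4 * ((k+2) * (k + 2 - 1)!) := by ring
      _ = 4 * (k + 3 - 1)! := by rw [h1]

lemma cyc_cases (n : ℕ) (a b : Fin n) :
    (b : ℤ) = (a : ℤ) + cyc n a b ∨ (b : ℤ) = (a : ℤ) + cyc n a b - n
    ∨ (b : ℤ) = (a : ℤ) - cyc n a b ∨ (b : ℤ) = (a : ℤ) - cyc n a b + n := by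
  have ha := a.isLt; have hb := b.isLt
  unfold cyc; omega

lemma coord_eq (n : ℕ) (a b c : Fin n) (hd : cyc n a b = cyc n a c)
    (hbool : ((b : ℤ) = (a : ℤ) + cyc n a b ∨ (b : ℤ) = (a : ℤ) + cyc n a b - n)
      ↔ ((c : ℤ) = (a : ℤ) + cyc n a c ∨ (c : ℤ) = (a : ℤ) + cyc n a c - n)) :
    b = c := by
  have h1 := cyc_cases n a b; have h2 := cyc_cases n a c
  have ha := a.isLt; have hb := b.isLt; have hc := c.isLt
  have : (b : ℤ) = (c : ℤ) := by omega
  exact Fin.ext (by exact_mod_cast this)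

lemma count_sum_replicate (k : ℕ) (t : Fin k) (d : Fin k → ℕ) :
    Multiset.count t (∑ i, Multiset.replicate (d i) i) = d t := by
  classical
  rw [Multiset.count_sum']
  rw [Finset.sum_eq_single t (fun i _ hne => by
      simp [Multiset.count_replicate, hne]) (by simp)]
  simp [Multiset.count_replicate]

lemma countAt_le_sym (n k j : ℕ) (hk : 1 ≤ k) (u : Node n k) :
    countAt n k u j ≤ 2 ^ k * (k + j - 1).choose j := by
  classical
  unfold countAt
  set i0 : Fin k := ⟨0, hk⟩ with hi0
  set F : Node n k → Sym (Fin k) j × (Fin k → Bool) := fun v =>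
    (if h : (∑ i, cyc n (u i) (v i)) = j then
        (⟨∑ i, Multiset.replicate (cyc n (u i) (v i)) i, by
          rw [multiset_card_sum]
          simpa [Multiset.card_replicate] using h⟩ : Sym (Fin k) j)
      else Sym.replicate j i0,
     fun i => decide ((v i : ℤ) = (u i : ℤ) + cyc n (u i) (v i)
        ∨ (v i : ℤ) = (u i : ℤ) + cyc n (u i) (v i) - n)) with hF
  have hinj : Set.InjOn F
      (Finset.univ.filter (fun v : Node n k => v ≠ u ∧ dM n k u v = j)) := by
    intro v hv w hw hvw
    have hv' : (∑ i, cyc n (u i) (v i)) = j := by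
      have h := (Finset.mem_filter.mp hv).2.2; rwa [dM_eq] at h
    have hw' : (∑ i, cyc n (u i) (w i)) = j := by
      have h := (Finset.mem_filter.mp hw).2.2; rwa [dM_eq] at h
    have hfst := congrArg Prod.fst hvw
    have hsnd := congrArg Prod.snd hvw
    simp only [hF, dif_pos hv', dif_pos hw'] at hfst
    have hm : (∑ i, Multiset.replicate (cyc n (u i) (v i)) i)
        = ∑ i, Multiset.replicate (cyc n (u i) (w i)) i := by
        have := congrArg Subtype.val hfst; erw [dif_pos hv', dif_pos hw'] at this; exact this
    have hd : ∀ i, cyc n (u i) (v i) = cyc n (u i) (w i) := by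
      intro i
      rw [← count_sum_replicate k i (fun i => cyc n (u i) (v i)), hm,
        count_sum_replicate]
    funext i
    have hb := congrFun hsnd i
    simp only [hF] at hb
    have hbool := decide_eq_decide.mp hb
    exact coord_eq n (u i) (v i) (w i) (hd i) hbool
  have hcard := Finset.card_le_card_of_injOn F (fun v _ => Finset.mem_univ (F v)) hinj
  calc (Finset.univ.filter (fun v : Node n k => v ≠ u ∧ dM n k u v = j)).card
      ≤ (Finset.univ : Finset (Sym (Fin k) j × (Fin k → Bool))).card := hcard
    _ = 2 ^ k * (k + j - 1).choose j := by
        rw [Finset.card_univ, Fintype.card_prod, Sym.card_sym_eq_choose,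
          Fintype.card_fin, Fintype.card_fun, Fintype.card_bool,
          Fintype.card_fin, mul_comm]

lemma countAt_le_pow (n k j : ℕ) (hk : 1 ≤ k) (u : Node n k) :
    countAt n k u j ≤ 4 * (j + k - 1) ^ (k - 1) := by
  have h1 := countAt_le_sym n k j hk u
  have e : k + j - 1 - j = k - 1 := by omega
  have hsym := Nat.choose_symm (show j ≤ k + j - 1 by omega)
  rw [e] at hsym
  have h2 : (k - 1)! * ((k + j - 1).choose j) ≤ (j + k - 1) ^ (k - 1) := by
    rw [← hsym, ← Nat.descFactorial_eq_factorial_mul_choose]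
    calc (k + j - 1).descFactorial (k - 1) ≤ (k + j - 1) ^ (k - 1) :=
          Nat.descFactorial_le_pow _ _
      _ = (j + k - 1) ^ (k - 1) := by rw [show k + j - 1 = j + k - 1 by omega]
  have h3 : (k - 1)! * countAt n k u j
      ≤ (k - 1)! * (4 * (j + k - 1) ^ (k - 1)) := by
    calc (k - 1)! * countAt n k u j
        ≤ (k - 1)! * (2 ^ k * (k + j - 1).choose j) := Nat.mul_le_mul_left _ h1
      _ = 2 ^ k * ((k - 1)! * (k + j - 1).choose j) := by ring
      _ ≤ (4 * (k - 1)!) * ((j + k - 1) ^ (k - 1)) :=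
          Nat.mul_le_mul (two_pow_le_four_factorial k) h2
      _ = (k - 1)! * (4 * (j + k - 1) ^ (k - 1)) := by ring
  exact Nat.le_of_mul_le_mul_left h3 (Nat.factorial_pos _)

lemma k_le_countAt_two (k : ℕ) (u : Node 2 k) : k ≤ countAt 2 k u 1 := by
  classical
  have hplus : ∀ a : Fin 2, a + 1 ≠ a := by decide
  have hcyc1 : ∀ a : Fin 2, cyc 2 a (a + 1) = 1 := by decide
  unfold countAt
  refine le_trans ?_ (Finset.card_le_card_of_injOn
    (s := (Finset.univ : Finset (Fin k)))
    (t := Finset.univ.filter (fun v : Node 2 k => v ≠ u ∧ dM 2 k u v = 1))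
    (fun i : Fin k => Function.update u i (u i + 1)) ?_ ?_)
  · simp
  · intro i _
    refine Finset.mem_filter.mpr ⟨Finset.mem_univ _, ?_, ?_⟩
    · intro h
      have h2 := congrFun h i
      simp only [Function.update_self] at h2
      exact hplus (u i) h2
    · rw [dM_eq, Finset.sum_eq_single i (fun t _ ht => by
        simp only [Function.update_of_ne ht, cyc_self]) (by simp)]
      simp only [Function.update_self]
      exact hcyc1 (u i)
  · intro i _ i' _ h
    by_contra hne
    have h1 := congrFun h i
    simp only [Function.update_self, Function.update_of_ne hne] at h1
    exact hplus (u i) h1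

/-! ### Real-analysis helpers -/

lemma rpow_alg_a {k : ℕ} (hk : 1 ≤ k) {x : ℝ} (hx : 1 ≤ x) :
    x ^ (k - 1) * x ^ (-(k : ℝ)) = x⁻¹ := by
  have hx0 : (0 : ℝ) < x := lt_of_lt_of_le one_pos hx
  have hc : ((k - 1 : ℕ) : ℝ) = (k : ℝ) - 1 := by
    push_cast [Nat.cast_sub hk]; ring
  rw [← Real.rpow_natCast x (k - 1), ← Real.rpow_add hx0, hc]
  rw [show (k : ℝ) - 1 + -(k : ℝ) = -1 by ring, Real.rpow_neg_one]

lemma rpow_alg_b {k : ℕ} (hk : 1 ≤ k) {x : ℝ} (hx : 1 ≤ x) :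
    x ^ (-(k : ℝ)) * x = (x ^ (k - 1))⁻¹ := by
  have hx0 : (0 : ℝ) < x := lt_of_lt_of_le one_pos hx
  have hc : ((k - 1 : ℕ) : ℝ) = (k : ℝ) - 1 := by
    push_cast [Nat.cast_sub hk]; ring
  have h1 : x ^ (-(k : ℝ)) * x = x ^ (-(k : ℝ) + 1) := by
    rw [Real.rpow_add hx0, Real.rpow_one]
  rw [h1, ← Real.rpow_natCast x (k - 1), ← Real.rpow_neg hx0.le, hc]
  ring_nf

lemma rpow_alg_c {k : ℕ} (hk : 1 ≤ k) {x : ℝ} (hx : 1 ≤ x) :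
    x ^ (k - 1) * (x ^ (-(k : ℝ)) * x ^ (-(k : ℝ))) = (x ^ (k + 1))⁻¹ := by
  have hx0 : (0 : ℝ) < x := lt_of_lt_of_le one_pos hx
  have hc : ((k - 1 : ℕ) : ℝ) = (k : ℝ) - 1 := by
    push_cast [Nat.cast_sub hk]; ring
  rw [← Real.rpow_natCast x (k - 1), ← Real.rpow_add hx0, ← Real.rpow_add hx0, hc]
  rw [show (k : ℝ) - 1 + (-(k : ℝ) + -(k : ℝ)) = -(((k + 1 : ℕ) : ℝ)) by push_cast; ring]
  rw [Real.rpow_neg hx0.le, Real.rpow_natCast]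

lemma rpow_alg_d {k : ℕ} (hk : 1 ≤ k) {x : ℝ} (hx : 1 ≤ x) :
    (x ^ (k + 1))⁻¹ ≤ (x ^ 2)⁻¹ := by
  have hx0 : (0 : ℝ) < x := lt_of_lt_of_le one_pos hx
  have h2 : x ^ 2 ≤ x ^ (k + 1) := pow_le_pow_right₀ hx (by omega)
  exact inv_anti₀ (by positivity) h2

lemma sum_inv_sq_le : ∀ M : ℕ, 1 ≤ M →
    ∑ j ∈ Finset.Icc 1 M, ((j : ℝ) ^ 2)⁻¹ ≤ 2 - (M : ℝ)⁻¹ := by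
  intro M
  induction M with
  | zero => omega
  | succ M ih =>
    intro _
    rcases Nat.eq_zero_or_pos M with h0 | hpos
    · subst h0; norm_num
    · rw [Finset.sum_Icc_succ_top (by omega)]
      have hM0 : (0 : ℝ) < M := by exact_mod_cast hpos
      have hM1 : (0 : ℝ) < (M : ℝ) + 1 := by linarith
      have e1 : (M : ℝ)⁻¹ - ((M : ℝ) + 1)⁻¹ = ((M : ℝ) * ((M : ℝ) + 1))⁻¹ := by
        field_simp
        ring
      have step : ((((M + 1 : ℕ)) : ℝ) ^ 2)⁻¹ ≤ (M : ℝ)⁻¹ - ((M : ℝ) + 1)⁻¹ := by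
        push_cast
        rw [e1]
        apply inv_anti₀ (by positivity)
        nlinarith
      have := ih hpos
      push_cast
      push_cast at this step
      nlinarith [step, this]

lemma exp_quarter_le : Real.exp (1 / 4) ≤ 3 / 2 := by
  by_contra hcon
  push_neg at hcon
  have h4 : Real.exp (1 / 4) ^ 4 = Real.exp 1 := by
    rw [← Real.exp_nat_mul]; norm_num
  have hlt : (3 / 2 : ℝ) ^ 4 < Real.exp (1 / 4) ^ 4 :=
    pow_lt_pow_left₀ hcon (by norm_num) (by norm_num)
  rw [h4] at hlt
  have := Real.exp_one_lt_d9
  norm_num at hlt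
  linarith

lemma tail_term_le {k j : ℕ} (hk : 1 ≤ k) (hj : 4 * ((k - 1) * (k - 1)) + 1 ≤ j) :
    (4 : ℝ) * ((j + k - 1 : ℕ) : ℝ) ^ (k - 1) * (((j : ℝ)) ^ (k - 1))⁻¹ ≤ 6 := by
  have hj1 : 1 ≤ j := by omega
  have hjR : (1 : ℝ) ≤ (j : ℝ) := by exact_mod_cast hj1
  have hj0 : (0 : ℝ) < j := by linarith
  set c : ℕ := k - 1 with hc
  have hcast : ((j + k - 1 : ℕ) : ℝ) = (j : ℝ) + c := by
    push_cast [show j + k - 1 = j + (k - 1) by omega]; ring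
  have hratio : ((j : ℝ) + c) ^ c * ((j : ℝ) ^ c)⁻¹ = (1 + (c : ℝ) / j) ^ c := by
    rw [← div_eq_mul_inv, ← div_pow]
    congr 1
    field_simp
  have hcc : (c : ℝ) * ((c : ℝ) / j) ≤ 1 / 4 := by
    have hj' : (4 : ℝ) * ((c : ℝ) * (c : ℝ)) + 1 ≤ j := by exact_mod_cast hj
    have e2 : (c : ℝ) * ((c : ℝ) / j) = ((c : ℝ) * c) / j := by ring
    rw [e2, div_le_iff₀ hj0]
    nlinarith
  have h1 : (1 + (c : ℝ) / j) ^ c ≤ Real.exp ((c : ℝ) / j) ^ c := by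
    apply pow_le_pow_left₀ (by positivity)
    linarith [Real.add_one_le_exp ((c : ℝ) / j)]
  have h2 : Real.exp ((c : ℝ) / j) ^ c = Real.exp ((c : ℝ) * ((c : ℝ) / j)) := by
    rw [← Real.exp_nat_mul]
  have h3 : Real.exp ((c : ℝ) * ((c : ℝ) / j)) ≤ Real.exp (1 / 4) :=
    Real.exp_le_exp.mpr hcc
  calc (4 : ℝ) * ((j + k - 1 : ℕ) : ℝ) ^ (k - 1) * (((j : ℝ)) ^ (k - 1))⁻¹
      = 4 * (((j : ℝ) + c) ^ c * ((j : ℝ) ^ c)⁻¹) := by rw [hcast]; ring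
    _ = 4 * (1 + (c : ℝ) / j) ^ c := by rw [hratio]
    _ ≤ 4 * Real.exp (1 / 4) := by
        have := h1.trans (le_of_eq h2) |>.trans h3
        nlinarith
    _ ≤ 4 * (3 / 2) := by nlinarith [exp_quarter_le]
    _ = 6 := by norm_num

end DRBAux

set_option maxHeartbeats 4000000 in
/-- Payoff bounds in the navigable equilibrium. With the counting
constants `ξ_k^-, ξ_k^+`, for sufficiently large `n`, every node `u` in the
navigable profile `r ≡ k` satisfies
`((ξ_k^-)^2/(2(ξ_k^+)^3))·n/(ln(2kn))^3 ≤ π_u ≤ (16(ξ_k^+)^2/(ξ_k^-)^3)·n/(ln n)^3`. -/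
theorem navigable_payoff_bounds (k g : ℕ) (hk : 1 ≤ k) (hg : 2 ≤ g)
    (ξm ξp : ℝ) (hξm : 0 < ξm) (hξp : 0 < ξp)
    (hb1 : ∀ n : ℕ, ∀ u : DRB.Node n k, ∀ j : ℕ, 1 ≤ j → j ≤ n / 2 →
      ξm * (j : ℝ) ^ (k - 1) ≤ (DRB.countAt n k u j : ℝ) ∧
        (DRB.countAt n k u j : ℝ) ≤ ξp * (j : ℝ) ^ (k - 1))
    (hb2 : ∀ n : ℕ, ∀ u : DRB.Node n k, ∀ j : ℕ, n / 2 < j → j ≤ k * (n / 2) →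
      1 ≤ DRB.countAt n k u j ∧
        (DRB.countAt n k u j : ℝ) ≤ ξp * (j : ℝ) ^ (k - 1)) :
    ∃ n0 : ℕ, ∀ n : ℕ, n0 ≤ n → ∀ u : DRB.Node n k,
      ξm ^ 2 / (2 * ξp ^ 3) * ((n : ℝ) / (Real.log (2 * k * n)) ^ 3) ≤
        DRB.payoff n k (fun _ => (k : ℝ)) u ∧
      DRB.payoff n k (fun _ => (k : ℝ)) u ≤
        16 * ξp ^ 2 / ξm ^ 3 * ((n : ℝ) / (Real.log n) ^ 3) := by
  classical
  open DRB DRBAux Finset in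
  refine ⟨2 ^ (k + 2) + 8 * (k * k) + 245, ?_⟩
  intro n hn u
  -- arithmetic preliminaries
  have hpow2 : 1 ≤ 2 ^ (k + 2) := Nat.one_le_two_pow
  have hpow1 : 1 ≤ 2 ^ (k + 1) := Nat.one_le_two_pow
  have hn245 : 245 ≤ n := by omega
  have hm2 : 2 ≤ n / 2 := by omega
  have hkk : 8 * (k * k) + 2 ≤ n := by omega
  have hnk2 : 2 ^ (k + 1) + 1 ≤ n := by
    have h : 2 ^ (k + 2) = 2 * 2 ^ (k + 1) := by rw [pow_succ]; ring
    omega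
  set m := n / 2 with hmdef
  set M := k * (n / 2) with hMdef
  have hm1 : 1 ≤ m := by omega
  have hmM : m ≤ M := Nat.le_mul_of_pos_left m (by omega)
  have hM1 : 1 ≤ M := le_trans hm1 hmM
  have hM2 : 2 ≤ M := le_trans hm2 hmM
  have hjm : ∀ j : ℕ, m < j → 4 * ((k - 1) * (k - 1)) + 1 ≤ j := by
    intro j hj
    have h1 : (k - 1) * (k - 1) ≤ k * k :=
      Nat.mul_le_mul (Nat.sub_le _ _) (Nat.sub_le _ _)
    omega
  -- ξp ≥ k
  have hpk : (k : ℝ) ≤ ξp := by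
    have h1 := DRBAux.k_le_countAt_two k (fun _ => (0 : Fin 2))
    have h2 := (hb1 2 (fun _ => (0 : Fin 2)) 1 le_rfl (by norm_num)).2
    rw [Nat.cast_one, one_pow, mul_one] at h2
    exact le_trans (by exact_mod_cast h1) h2
  -- casts
  have hmcast : ((m : ℝ)) ≤ (n : ℝ) / 2 := Nat.cast_div_le
  have hm2cast : (2 : ℝ) ≤ (m : ℝ) := by exact_mod_cast hm2
  have hm0R : (0 : ℝ) < (m : ℝ) := by linarith
  have hn0 : (0 : ℝ) < (n : ℝ) := by
    have : (245 : ℝ) ≤ (n : ℝ) := by exact_mod_cast hn245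
    linarith
  have h3m : (n : ℝ) ≤ 3 * (m : ℝ) := by exact_mod_cast (by omega : n ≤ 3 * m)
  have hfloor : (n : ℝ) ≤ 2 * (m : ℝ) + 1 := by
    exact_mod_cast (by omega : n ≤ 2 * m + 1)
  have hkR : (1 : ℝ) ≤ (k : ℝ) := by exact_mod_cast hk
  -- logs
  set Lm := Real.log m with hLmdef
  set Ln := Real.log n with hLndef
  set LQ := Real.log (2 * (k : ℝ) * n) with hLQdef
  have hLm0 : 0 < Lm := Real.log_pos (by linarith)
  have hLn0 : 0 < Ln := Real.log_pos (by linarith)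
  have hn245R : (245 : ℝ) ≤ (n : ℝ) := by exact_mod_cast hn245
  have hLQ0 : 0 < LQ := Real.log_pos (by
    calc (1 : ℝ) < 2 := one_lt_two
      _ ≤ 2 * (k : ℝ) := by linarith only [hkR]
      _ = 2 * (k : ℝ) * 1 := by ring
      _ ≤ 2 * (k : ℝ) * n := by
          apply mul_le_mul_of_nonneg_left _ (by linarith only [hkR] : (0:ℝ) ≤ 2 * (k:ℝ))
          linarith only [hn245R])
  have hLm45 : 4 / 5 * Ln ≤ Lm := by
    have hlog3 : Ln ≤ Real.log 3 + Lm := by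
      rw [← Real.log_mul (by norm_num) (ne_of_gt hm0R)]
      exact Real.log_le_log hn0 h3m
    have h5log3 : 5 * Real.log 3 ≤ Ln := by
      have h243 : Real.log 243 ≤ Ln :=
        Real.log_le_log (by norm_num)
          (by exact_mod_cast (by omega : 243 ≤ n))
      have e : (243 : ℝ) = 3 ^ 5 := by norm_num
      rw [e, Real.log_pow] at h243
      push_cast at h243
      linarith
    linarith
  -- harmonic sums
  have hharm_low : Lm ≤ ∑ j ∈ Finset.Icc 1 m, (j : ℝ)⁻¹ := by
    have h1 := log_add_one_le_harmonic m
    have h2 : ((harmonic m : ℚ) : ℝ) = ∑ j ∈ Finset.Icc 1 m, (j : ℝ)⁻¹ := by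
      rw [harmonic_eq_sum_Icc]
      push_cast
      rfl
    have h3 : Lm ≤ Real.log ((m : ℝ) + 1) :=
      Real.log_le_log hm0R (by linarith)
    push_cast at h1
    linarith [h2 ▸ h1]
  have hharm_up : ∑ j ∈ Finset.Icc 1 M, (j : ℝ)⁻¹ ≤ LQ := by
    have h1 := harmonic_le_one_add_log M
    have h2 : ((harmonic M : ℚ) : ℝ) = ∑ j ∈ Finset.Icc 1 M, (j : ℝ)⁻¹ := by
      rw [harmonic_eq_sum_Icc]
      push_cast
      rfl
    have hM0R : (0 : ℝ) < (M : ℝ) := by exact_mod_cast hM1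
    have h3 : 1 + Real.log M ≤ LQ := by
      have hMle : (M : ℝ) ≤ (k : ℝ) * ((n : ℝ) / 2) := by
        rw [hMdef]
        push_cast
        exact mul_le_mul_of_nonneg_left hmcast (by linarith)
      have hexp3 : Real.exp 1 ≤ 3 := by
        have := Real.exp_one_lt_d9
        linarith
      have hMe : (M : ℝ) * Real.exp 1 ≤ 2 * (k : ℝ) * n := by
        have hkn0 : (0 : ℝ) ≤ (k : ℝ) * (n : ℝ) := by positivity
        calc (M : ℝ) * Real.exp 1 ≤ (M : ℝ) * 3 :=
              mul_le_mul_of_nonneg_left hexp3 (Nat.cast_nonneg M)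
          _ ≤ ((k : ℝ) * ((n : ℝ) / 2)) * 3 :=
              mul_le_mul_of_nonneg_right hMle (by norm_num)
          _ ≤ 2 * (k : ℝ) * n := by linarith only [hkn0]
      have h4 := Real.log_le_log (by positivity) hMe
      rw [Real.log_mul (ne_of_gt hM0R) (Real.exp_ne_zero 1), Real.log_exp] at h4
      linarith
    linarith [h2 ▸ h1]
  -- count bounds valid on all of Icc 1 M
  have hcount_up : ∀ w : Node n k, ∀ j ∈ Finset.Icc 1 M,
      (countAt n k w j : ℝ) ≤ ξp * (j : ℝ) ^ (k - 1) := by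
    intro w j hj
    obtain ⟨hj1, hjM⟩ := Finset.mem_Icc.mp hj
    rcases le_or_gt j m with h | h
    · exact (hb1 n w j hj1 h).2
    · exact (hb2 n w j h hjM).2
  have hjcast : ∀ j ∈ Finset.Icc 1 M, (1 : ℝ) ≤ (j : ℝ) := by
    intro j hj
    exact_mod_cast (Finset.mem_Icc.mp hj).1
  have hjcast' : ∀ j ∈ Finset.Icc 1 m, (1 : ℝ) ≤ (j : ℝ) := by
    intro j hj
    exact_mod_cast (Finset.mem_Icc.mp hj).1
  -- cnorm bounds (uniform in the node)
  have hcnorm_eq : ∀ w : Node n k, cnorm n k w (k : ℝ)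
      = ∑ j ∈ Finset.Icc 1 M, (countAt n k w j : ℝ) * ((j : ℝ)) ^ (-(k : ℝ)) :=
    fun w => DRBAux.sum_others_eq n k w (fun j => (j : ℝ) ^ (-(k : ℝ)))
  have hcU : ∀ w : Node n k, cnorm n k w (k : ℝ) ≤ ξp * LQ := by
    intro w
    rw [hcnorm_eq w]
    calc ∑ j ∈ Finset.Icc 1 M, (countAt n k w j : ℝ) * ((j : ℝ)) ^ (-(k : ℝ))
        ≤ ∑ j ∈ Finset.Icc 1 M, ξp * (j : ℝ)⁻¹ := by
          apply Finset.sum_le_sum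
          intro j hj
          have hx := hjcast j hj
          calc (countAt n k w j : ℝ) * ((j : ℝ)) ^ (-(k : ℝ))
              ≤ (ξp * (j : ℝ) ^ (k - 1)) * ((j : ℝ)) ^ (-(k : ℝ)) :=
                mul_le_mul_of_nonneg_right (hcount_up w j hj)
                  (Real.rpow_nonneg (by linarith) _)
            _ = ξp * (j : ℝ)⁻¹ := by
                rw [mul_assoc, DRBAux.rpow_alg_a hk hx]
      _ = ξp * ∑ j ∈ Finset.Icc 1 M, (j : ℝ)⁻¹ := by rw [Finset.mul_sum]
      _ ≤ ξp * LQ := mul_le_mul_of_nonneg_left hharm_up hξp.le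
  have hcL : ∀ w : Node n k, ξm * Lm ≤ cnorm n k w (k : ℝ) := by
    intro w
    rw [hcnorm_eq w]
    calc ξm * Lm ≤ ξm * ∑ j ∈ Finset.Icc 1 m, (j : ℝ)⁻¹ :=
          mul_le_mul_of_nonneg_left hharm_low hξm.le
      _ = ∑ j ∈ Finset.Icc 1 m, ξm * (j : ℝ)⁻¹ := by rw [Finset.mul_sum]
      _ ≤ ∑ j ∈ Finset.Icc 1 m, (countAt n k w j : ℝ) * ((j : ℝ)) ^ (-(k : ℝ)) := by
          apply Finset.sum_le_sum
          intro j hj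
          have hx := hjcast' j hj
          obtain ⟨hj1, hjm'⟩ := Finset.mem_Icc.mp hj
          calc ξm * (j : ℝ)⁻¹ = (ξm * (j : ℝ) ^ (k - 1)) * ((j : ℝ)) ^ (-(k : ℝ)) := by
                rw [mul_assoc, DRBAux.rpow_alg_a hk hx]
            _ ≤ (countAt n k w j : ℝ) * ((j : ℝ)) ^ (-(k : ℝ)) :=
                mul_le_mul_of_nonneg_right (hb1 n w j hj1 hjm').1
                  (Real.rpow_nonneg (by linarith) _)
      _ ≤ ∑ j ∈ Finset.Icc 1 M, (countAt n k w j : ℝ) * ((j : ℝ)) ^ (-(k : ℝ)) := by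
          apply Finset.sum_le_sum_of_subset_of_nonneg
            (Finset.Icc_subset_Icc_right hmM)
          intro j _ _
          positivity
  have hcL0 : (0 : ℝ) < ξm * Lm := mul_pos hξm hLm0
  have hcU0 : (0 : ℝ) < ξp * LQ := mul_pos hξp hLQ0
  have hc0 : ∀ w : Node n k, 0 < cnorm n k w (k : ℝ) :=
    fun w => lt_of_lt_of_le hcL0 (hcL w)
  -- the A and B sums
  set A : ℝ := ∑ j ∈ Finset.Icc 1 M,
    (countAt n k u j : ℝ) * (((j : ℝ)) ^ (-(k : ℝ)) * (j : ℝ)) with hAdef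
  set B : ℝ := ∑ j ∈ Finset.Icc 1 M,
    (countAt n k u j : ℝ) * (((j : ℝ)) ^ (-(k : ℝ)) * ((j : ℝ)) ^ (-(k : ℝ))) with hBdef
  have hA0 : 0 ≤ A := Finset.sum_nonneg fun j _ => by positivity
  have hB0 : 0 ≤ B := Finset.sum_nonneg fun j _ => by positivity
  -- linkDist = A / cnorm
  have hlD : linkDist n k u (k : ℝ) = A / cnorm n k u (k : ℝ) := by
    rw [hAdef, ← DRBAux.sum_others_eq n k u (fun j => ((j : ℝ)) ^ (-(k : ℝ)) * (j : ℝ)),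
      linkDist, Finset.sum_div]
    exact Finset.sum_congr rfl fun v _ => by rw [linkProb, div_mul_eq_mul_div]
  -- A bounds
  have hAlow : ξm * (m : ℝ) ≤ A := by
    calc ξm * (m : ℝ) = ∑ _j ∈ Finset.Icc 1 m, ξm := by
          rw [Finset.sum_const, Nat.card_Icc]
          simp [mul_comm]
      _ ≤ ∑ j ∈ Finset.Icc 1 m,
            (countAt n k u j : ℝ) * (((j : ℝ)) ^ (-(k : ℝ)) * (j : ℝ)) := by
          apply Finset.sum_le_sum
          intro j hj
          have hx := hjcast' j hj
          have hx0 : (0 : ℝ) < (j : ℝ) := by linarith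
          obtain ⟨hj1, hjm'⟩ := Finset.mem_Icc.mp hj
          calc ξm = (ξm * (j : ℝ) ^ (k - 1)) * (((j : ℝ)) ^ (-(k : ℝ)) * (j : ℝ)) := by
                rw [show (ξm * (j : ℝ) ^ (k - 1)) * (((j : ℝ)) ^ (-(k : ℝ)) * (j : ℝ))
                    = ξm * (((j : ℝ) ^ (k - 1) * ((j : ℝ)) ^ (-(k : ℝ))) * (j : ℝ)) by ring,
                  DRBAux.rpow_alg_a hk hx, inv_mul_cancel₀ (ne_of_gt hx0), mul_one]
            _ ≤ (countAt n k u j : ℝ) * (((j : ℝ)) ^ (-(k : ℝ)) * (j : ℝ)) :=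
                mul_le_mul_of_nonneg_right (hb1 n u j hj1 hjm').1 (by positivity)
      _ ≤ A := by
          rw [hAdef]
          apply Finset.sum_le_sum_of_subset_of_nonneg
            (Finset.Icc_subset_Icc_right hmM)
          intro j _ _
          positivity
  have hAup : A ≤ 7 * ξp * (m : ℝ) := by
    have hicc : ∀ x : ℕ, Finset.Icc 1 x = Finset.Ioc 0 x := by
      intro x; ext t; simp [Finset.mem_Icc, Finset.mem_Ioc]; omega
    have hsplit : A = (∑ j ∈ Finset.Ioc 0 m,
        (countAt n k u j : ℝ) * (((j : ℝ)) ^ (-(k : ℝ)) * (j : ℝ)))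
        + ∑ j ∈ Finset.Ioc m M,
        (countAt n k u j : ℝ) * (((j : ℝ)) ^ (-(k : ℝ)) * (j : ℝ)) := by
      rw [hAdef, hicc M,
        ← Finset.sum_Ioc_consecutive _ (Nat.zero_le m) hmM]
    have hhead : (∑ j ∈ Finset.Ioc 0 m,
        (countAt n k u j : ℝ) * (((j : ℝ)) ^ (-(k : ℝ)) * (j : ℝ))) ≤ ξp * m := by
      rw [← hicc m]
      calc ∑ j ∈ Finset.Icc 1 m,
            (countAt n k u j : ℝ) * (((j : ℝ)) ^ (-(k : ℝ)) * (j : ℝ))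
          ≤ ∑ _j ∈ Finset.Icc 1 m, ξp := by
            apply Finset.sum_le_sum
            intro j hj
            have hx := hjcast' j hj
            have hx0 : (0 : ℝ) < (j : ℝ) := by linarith
            obtain ⟨hj1, hjm'⟩ := Finset.mem_Icc.mp hj
            calc (countAt n k u j : ℝ) * (((j : ℝ)) ^ (-(k : ℝ)) * (j : ℝ))
                ≤ (ξp * (j : ℝ) ^ (k - 1)) * (((j : ℝ)) ^ (-(k : ℝ)) * (j : ℝ)) :=
                  mul_le_mul_of_nonneg_right (hb1 n u j hj1 hjm').2 (by positivity)
              _ = ξp := by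
                  rw [show (ξp * (j : ℝ) ^ (k - 1)) * (((j : ℝ)) ^ (-(k : ℝ)) * (j : ℝ))
                      = ξp * (((j : ℝ) ^ (k - 1) * ((j : ℝ)) ^ (-(k : ℝ))) * (j : ℝ)) by ring,
                    DRBAux.rpow_alg_a hk hx, inv_mul_cancel₀ (ne_of_gt hx0), mul_one]
        _ = ξp * m := by
            rw [Finset.sum_const, Nat.card_Icc]
            simp [mul_comm]
    have htail : (∑ j ∈ Finset.Ioc m M,
        (countAt n k u j : ℝ) * (((j : ℝ)) ^ (-(k : ℝ)) * (j : ℝ))) ≤ 6 * ((k - 1 : ℕ) * (m : ℝ)) := by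
      calc ∑ j ∈ Finset.Ioc m M,
            (countAt n k u j : ℝ) * (((j : ℝ)) ^ (-(k : ℝ)) * (j : ℝ))
          ≤ ∑ _j ∈ Finset.Ioc m M, (6 : ℝ) := by
            apply Finset.sum_le_sum
            intro j hj
            obtain ⟨hjm', hjM⟩ := Finset.mem_Ioc.mp hj
            have hj1 : 1 ≤ j := by omega
            have hx : (1 : ℝ) ≤ (j : ℝ) := by exact_mod_cast hj1
            calc (countAt n k u j : ℝ) * (((j : ℝ)) ^ (-(k : ℝ)) * (j : ℝ))
                ≤ (4 * ((j + k - 1 : ℕ) : ℝ) ^ (k - 1)) * (((j : ℝ)) ^ (-(k : ℝ)) * (j : ℝ)) := by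
                  apply mul_le_mul_of_nonneg_right _ (by positivity)
                  calc (countAt n k u j : ℝ) ≤ ((4 * (j + k - 1) ^ (k - 1) : ℕ) : ℝ) := by
                        exact_mod_cast DRBAux.countAt_le_pow n k j hk u
                    _ = 4 * ((j + k - 1 : ℕ) : ℝ) ^ (k - 1) := by push_cast; ring
              _ = 4 * ((j + k - 1 : ℕ) : ℝ) ^ (k - 1) * (((j : ℝ)) ^ (k - 1))⁻¹ := by
                  rw [DRBAux.rpow_alg_b hk hx]
              _ ≤ 6 := DRBAux.tail_term_le hk (hjm j hjm')
        _ = 6 * ((k - 1 : ℕ) * (m : ℝ)) := by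
            rw [Finset.sum_const, Nat.card_Ioc, nsmul_eq_mul]
            have e : M - m = (k - 1) * m := by
              rw [hMdef, hmdef, Nat.sub_mul, one_mul]
            rw [e]
            push_cast
            ring
    have hk1p : ((k - 1 : ℕ) : ℝ) ≤ ξp := by
      have : ((k - 1 : ℕ) : ℝ) ≤ (k : ℝ) := by exact_mod_cast Nat.sub_le k 1
      linarith
    have h6 : ((k - 1 : ℕ) : ℝ) * (m : ℝ) ≤ ξp * (m : ℝ) :=
      mul_le_mul_of_nonneg_right hk1p hm0R.le
    rw [hsplit]
    linarith only [hhead, htail, h6]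
  -- B bounds
  have hBup : B ≤ 2 * ξp := by
    rw [hBdef]
    calc ∑ j ∈ Finset.Icc 1 M,
          (countAt n k u j : ℝ) * (((j : ℝ)) ^ (-(k : ℝ)) * ((j : ℝ)) ^ (-(k : ℝ)))
        ≤ ∑ j ∈ Finset.Icc 1 M, ξp * (((j : ℝ)) ^ 2)⁻¹ := by
          apply Finset.sum_le_sum
          intro j hj
          have hx := hjcast j hj
          calc (countAt n k u j : ℝ) * (((j : ℝ)) ^ (-(k : ℝ)) * ((j : ℝ)) ^ (-(k : ℝ)))
              ≤ (ξp * (j : ℝ) ^ (k - 1)) * (((j : ℝ)) ^ (-(k : ℝ)) * ((j : ℝ)) ^ (-(k : ℝ))) :=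
                mul_le_mul_of_nonneg_right (hcount_up u j hj) (by positivity)
            _ = ξp * (((j : ℝ)) ^ (k + 1))⁻¹ := by
                rw [mul_assoc, DRBAux.rpow_alg_c hk hx]
            _ ≤ ξp * (((j : ℝ)) ^ 2)⁻¹ :=
                mul_le_mul_of_nonneg_left (DRBAux.rpow_alg_d hk hx) hξp.le
      _ = ξp * ∑ j ∈ Finset.Icc 1 M, (((j : ℝ)) ^ 2)⁻¹ := by rw [Finset.mul_sum]
      _ ≤ ξp * 2 := by
          apply mul_le_mul_of_nonneg_left _ hξp.le
          have hMinv : (0 : ℝ) ≤ ((M : ℝ))⁻¹ := by positivity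
          linarith [DRBAux.sum_inv_sq_le M hM1]
      _ = 2 * ξp := by ring
  have hBlow : ξm * (1 + ((2 : ℝ) ^ (k + 1))⁻¹) ≤ B := by
    have hsub : Finset.Icc 1 2 ⊆ Finset.Icc 1 M := Finset.Icc_subset_Icc_right hM2
    have h12 : (∑ j ∈ Finset.Icc 1 2,
        (countAt n k u j : ℝ) * (((j : ℝ)) ^ (-(k : ℝ)) * ((j : ℝ)) ^ (-(k : ℝ)))) ≤ B := by
      rw [hBdef]
      apply Finset.sum_le_sum_of_subset_of_nonneg hsub
      intro j _ _
      positivity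
    have hIcc12 : Finset.Icc 1 2 = ({1, 2} : Finset ℕ) := by decide
    have hterm1 : ξm ≤ (countAt n k u 1 : ℝ) *
        (((1 : ℕ) : ℝ) ^ (-(k : ℝ)) * ((1 : ℕ) : ℝ) ^ (-(k : ℝ))) := by
      have h := (hb1 n u 1 le_rfl hm1).1
      simp only [Nat.cast_one, Real.one_rpow, one_pow, mul_one] at h ⊢
      exact h
    have hterm2 : ξm * ((2 : ℝ) ^ (k + 1))⁻¹ ≤ (countAt n k u 2 : ℝ) *
        (((2 : ℕ) : ℝ) ^ (-(k : ℝ)) * ((2 : ℕ) : ℝ) ^ (-(k : ℝ))) := by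
      have h := (hb1 n u 2 (by norm_num) hm2).1
      have hx : (1 : ℝ) ≤ ((2 : ℕ) : ℝ) := by norm_num
      calc ξm * ((2 : ℝ) ^ (k + 1))⁻¹
          = (ξm * ((2 : ℕ) : ℝ) ^ (k - 1)) *
            (((2 : ℕ) : ℝ) ^ (-(k : ℝ)) * ((2 : ℕ) : ℝ) ^ (-(k : ℝ))) := by
            rw [mul_assoc, DRBAux.rpow_alg_c hk hx]
            push_cast
            ring
        _ ≤ (countAt n k u 2 : ℝ) *
            (((2 : ℕ) : ℝ) ^ (-(k : ℝ)) * ((2 : ℕ) : ℝ) ^ (-(k : ℝ))) :=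
            mul_le_mul_of_nonneg_right h (by positivity)
    calc ξm * (1 + ((2 : ℝ) ^ (k + 1))⁻¹) = ξm + ξm * ((2 : ℝ) ^ (k + 1))⁻¹ := by ring
      _ ≤ (countAt n k u 1 : ℝ) *
            (((1 : ℕ) : ℝ) ^ (-(k : ℝ)) * ((1 : ℕ) : ℝ) ^ (-(k : ℝ)))
          + (countAt n k u 2 : ℝ) *
            (((2 : ℕ) : ℝ) ^ (-(k : ℝ)) * ((2 : ℕ) : ℝ) ^ (-(k : ℝ))) :=
          add_le_add hterm1 hterm2
      _ = ∑ j ∈ Finset.Icc 1 2,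
            (countAt n k u j : ℝ) * (((j : ℝ)) ^ (-(k : ℝ)) * ((j : ℝ)) ^ (-(k : ℝ))) := by
          rw [hIcc12]
          rw [Finset.sum_insert (by decide), Finset.sum_singleton]
      _ ≤ B := h12
  -- recip bounds
  have hrecip_term : ∀ v ∈ others n k u,
      linkProb n k u v (k : ℝ) * linkProb n k v u (k : ℝ)
        = ((dM n k u v : ℝ) ^ (-(k : ℝ)) * (dM n k u v : ℝ) ^ (-(k : ℝ)))
          / (cnorm n k u (k : ℝ) * cnorm n k v (k : ℝ)) := by
    intro v _
    rw [linkProb, linkProb, DRBAux.dM_comm n k v u, div_mul_div_comm]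
  have hrecip_up : recip n k (fun _ => (k : ℝ)) u ≤ B / (ξm * Lm) ^ 2 := by
    rw [recip]
    calc ∑ v ∈ others n k u, linkProb n k u v (k : ℝ) * linkProb n k v u (k : ℝ)
        ≤ ∑ v ∈ others n k u,
            ((dM n k u v : ℝ) ^ (-(k : ℝ)) * (dM n k u v : ℝ) ^ (-(k : ℝ)))
              / (ξm * Lm) ^ 2 := by
          apply Finset.sum_le_sum
          intro v hv
          rw [hrecip_term v hv]
          apply div_le_div_of_nonneg_left (by positivity) (by positivity)
          calc (ξm * Lm) ^ 2 = (ξm * Lm) * (ξm * Lm) := by ring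
            _ ≤ cnorm n k u (k : ℝ) * cnorm n k v (k : ℝ) :=
              mul_le_mul (hcL u) (hcL v) hcL0.le (hc0 u).le
      _ = (∑ v ∈ others n k u,
            (dM n k u v : ℝ) ^ (-(k : ℝ)) * (dM n k u v : ℝ) ^ (-(k : ℝ)))
              / (ξm * Lm) ^ 2 := by rw [Finset.sum_div]
      _ = B / (ξm * Lm) ^ 2 := by
          rw [hBdef, DRBAux.sum_others_eq n k u
            (fun j => ((j : ℝ)) ^ (-(k : ℝ)) * ((j : ℝ)) ^ (-(k : ℝ)))]
  have hrecip_low : B / (ξp * LQ) ^ 2 ≤ recip n k (fun _ => (k : ℝ)) u := by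
    rw [recip]
    calc B / (ξp * LQ) ^ 2
        = (∑ v ∈ others n k u,
            (dM n k u v : ℝ) ^ (-(k : ℝ)) * (dM n k u v : ℝ) ^ (-(k : ℝ)))
              / (ξp * LQ) ^ 2 := by
          rw [hBdef, DRBAux.sum_others_eq n k u
            (fun j => ((j : ℝ)) ^ (-(k : ℝ)) * ((j : ℝ)) ^ (-(k : ℝ)))]
      _ = ∑ v ∈ others n k u,
            ((dM n k u v : ℝ) ^ (-(k : ℝ)) * (dM n k u v : ℝ) ^ (-(k : ℝ)))
              / (ξp * LQ) ^ 2 := by rw [Finset.sum_div]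
      _ ≤ ∑ v ∈ others n k u, linkProb n k u v (k : ℝ) * linkProb n k v u (k : ℝ) := by
          apply Finset.sum_le_sum
          intro v hv
          rw [hrecip_term v hv]
          apply div_le_div_of_nonneg_left (by positivity)
            (mul_pos (hc0 u) (hc0 v))
          calc cnorm n k u (k : ℝ) * cnorm n k v (k : ℝ)
              ≤ (ξp * LQ) * (ξp * LQ) :=
                mul_le_mul (hcU u) (hcU v) (hc0 v).le hcU0.le
            _ = (ξp * LQ) ^ 2 := by ring
  have hrecip0 : 0 ≤ recip n k (fun _ => (k : ℝ)) u :=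
    le_trans (by positivity) hrecip_low
  -- payoff bounds
  have hpay : payoff n k (fun _ => (k : ℝ)) u
      = linkDist n k u (k : ℝ) * recip n k (fun _ => (k : ℝ)) u := rfl
  have h7pm : (0 : ℝ) ≤ 7 * ξp * (m : ℝ) :=
    mul_nonneg (mul_nonneg (by norm_num) hξp.le) hm0R.le
  have hlD_up : linkDist n k u (k : ℝ) ≤ 7 * ξp * (m : ℝ) / (ξm * Lm) := by
    rw [hlD]
    exact div_le_div₀ h7pm hAup hcL0 (hcL u)
  have hlD_low : ξm * (m : ℝ) / (ξp * LQ) ≤ linkDist n k u (k : ℝ) := by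
    rw [hlD]
    exact div_le_div₀ hA0 hAlow (hc0 u) (hcU u)
  have hlD0 : 0 ≤ linkDist n k u (k : ℝ) :=
    le_trans (div_nonneg (mul_nonneg hξm.le hm0R.le) hcU0.le) hlD_low
  have hrec_up2 : recip n k (fun _ => (k : ℝ)) u ≤ 2 * ξp / (ξm * Lm) ^ 2 :=
    hrecip_up.trans (div_le_div₀ (by linarith only [hξp]) hBup (pow_pos hcL0 2) le_rfl)
  have hrec_low2 : ξm * (1 + ((2 : ℝ) ^ (k + 1))⁻¹) / (ξp * LQ) ^ 2
      ≤ recip n k (fun _ => (k : ℝ)) u :=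
    le_trans (div_le_div₀ hB0 hBlow (pow_pos hcU0 2) le_rfl) hrecip_low
  have hE0 : (0 : ℝ) < (2 : ℝ) ^ (k + 1) := by positivity
  have hεnn : (0 : ℝ) ≤ ξm * (1 + ((2 : ℝ) ^ (k + 1))⁻¹) :=
    mul_nonneg hξm.le (by positivity)
  have hpayoff_up : payoff n k (fun _ => (k : ℝ)) u
      ≤ 7 * ξp * (m : ℝ) / (ξm * Lm) * (2 * ξp / (ξm * Lm) ^ 2) := by
    rw [hpay]
    exact mul_le_mul hlD_up hrec_up2 hrecip0
      (div_nonneg h7pm hcL0.le)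
  have hpayoff_low : ξm * (m : ℝ) / (ξp * LQ)
      * (ξm * (1 + ((2 : ℝ) ^ (k + 1))⁻¹) / (ξp * LQ) ^ 2)
      ≤ payoff n k (fun _ => (k : ℝ)) u := by
    rw [hpay]
    exact mul_le_mul hlD_low hrec_low2
      (div_nonneg hεnn (pow_pos hcU0 2).le) hlD0
  constructor
  · -- lower bound
    refine le_trans ?_ hpayoff_low
    have e1 : ξm * (m : ℝ) / (ξp * LQ)
        * (ξm * (1 + ((2 : ℝ) ^ (k + 1))⁻¹) / (ξp * LQ) ^ 2)
        = ξm ^ 2 * ((m : ℝ) * (1 + ((2 : ℝ) ^ (k + 1))⁻¹)) / (ξp ^ 3 * LQ ^ 3) := by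
      field_simp
    have e2 : ξm ^ 2 / (2 * ξp ^ 3) * ((n : ℝ) / LQ ^ 3)
        = ξm ^ 2 * ((n : ℝ) / 2) / (ξp ^ 3 * LQ ^ 3) := by
      field_simp
    rw [e1, e2]
    apply (div_le_div_iff_of_pos_right (mul_pos (pow_pos hξp 3) (pow_pos hLQ0 3))).mpr
    have hεm : (n : ℝ) / 2 ≤ (m : ℝ) * (1 + ((2 : ℝ) ^ (k + 1))⁻¹) := by
      set E := (2 : ℝ) ^ (k + 1) with hEdef
      have hEn : E + 1 ≤ (n : ℝ) := by
        rw [hEdef]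
        exact_mod_cast hnk2
      have h1 : E / 2 ≤ (m : ℝ) := by linarith only [hEn, hfloor]
      have e3 : E / 2 * E⁻¹ = 1 / 2 := by
        field_simp
      have h2 : (1 : ℝ) / 2 ≤ (m : ℝ) * E⁻¹ := by
        rw [← e3]
        exact mul_le_mul_of_nonneg_right h1 (inv_nonneg.mpr hE0.le)
      have hexp : (m : ℝ) * (1 + E⁻¹) = (m : ℝ) + (m : ℝ) * E⁻¹ := by ring
      rw [hexp]
      linarith only [h2, hfloor]
    have := mul_le_mul_of_nonneg_left hεm (sq_nonneg ξm)
    calc ξm ^ 2 * ((n : ℝ) / 2) = ξm ^ 2 * ((n : ℝ) / 2) := rfl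
      _ ≤ ξm ^ 2 * ((m : ℝ) * (1 + ((2 : ℝ) ^ (k + 1))⁻¹)) := by
          exact mul_le_mul_of_nonneg_left hεm (sq_nonneg ξm)
  · -- upper bound
    refine le_trans hpayoff_up ?_
    have e3 : 7 * ξp * (m : ℝ) / (ξm * Lm) * (2 * ξp / (ξm * Lm) ^ 2)
        = 14 * ξp ^ 2 * (m : ℝ) / (ξm ^ 3 * Lm ^ 3) := by
      field_simp
      ring
    have e4 : 16 * ξp ^ 2 / ξm ^ 3 * ((n : ℝ) / Ln ^ 3)
        = 16 * ξp ^ 2 * (n : ℝ) / (ξm ^ 3 * Ln ^ 3) := by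
      field_simp
    rw [e3, e4]
    rw [div_le_div_iff₀ (mul_pos (pow_pos hξm 3) (pow_pos hLm0 3))
      (mul_pos (pow_pos hξm 3) (pow_pos hLn0 3))]
    have hmn : 14 * (m : ℝ) * Ln ^ 3 ≤ 16 * (n : ℝ) * Lm ^ 3 := by
      have hcube : (4 / 5 * Ln) ^ 3 ≤ Lm ^ 3 :=
        pow_le_pow_left₀ (by positivity) hLm45 3
      have h1 : 14 * (m : ℝ) * Ln ^ 3 ≤ 7 * (n : ℝ) * Ln ^ 3 := by
        have h14 : (14 : ℝ) * m ≤ 7 * n := by linarith only [hmcast]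
        calc 14 * (m : ℝ) * Ln ^ 3 = (14 * (m : ℝ)) * Ln ^ 3 := by ring
          _ ≤ (7 * (n : ℝ)) * Ln ^ 3 :=
              mul_le_mul_of_nonneg_right h14 (pow_pos hLn0 3).le
          _ = 7 * (n : ℝ) * Ln ^ 3 := by ring
      have h2 : 7 * (n : ℝ) * Ln ^ 3 ≤ 16 * (n : ℝ) * Lm ^ 3 := by
        have hc2 : 64 / 125 * Ln ^ 3 ≤ Lm ^ 3 := by
          calc 64 / 125 * Ln ^ 3 = (4 / 5 * Ln) ^ 3 := by ring
            _ ≤ Lm ^ 3 := hcube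
        have h716 : 7 * Ln ^ 3 ≤ 16 * Lm ^ 3 := by
          linarith only [hc2, (pow_pos hLn0 3).le]
        calc 7 * (n : ℝ) * Ln ^ 3 = (n : ℝ) * (7 * Ln ^ 3) := by ring
          _ ≤ (n : ℝ) * (16 * Lm ^ 3) := mul_le_mul_of_nonneg_left h716 hn0.le
          _ = 16 * (n : ℝ) * Lm ^ 3 := by ring
      linarith only [h1, h2]
    calc 14 * ξp ^ 2 * (m : ℝ) * (ξm ^ 3 * Ln ^ 3)
        = (ξp ^ 2 * ξm ^ 3) * (14 * (m : ℝ) * Ln ^ 3) := by ring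
      _ ≤ (ξp ^ 2 * ξm ^ 3) * (16 * (n : ℝ) * Lm ^ 3) :=
          mul_le_mul_of_nonneg_left hmn
            (mul_nonneg (sq_nonneg ξp) (pow_pos hξm 3).le)
      _ = 16 * ξp ^ 2 * (n : ℝ) * (ξm ^ 3 * Lm ^ 3) := by ring
end
end

section
/- In the k-dimensional grid with k > 1, suppose ξ_k^− is a positive constant depending only on k such that b_u(j) ≥ ξ_k^− j^{k−1} for all 1 ≤ j ≤ ⌊n/2⌋, where b_u(j) is the number of nodes at grid distance exactly j from u. Let η > 0, let S ⊆ Σ be a finite set, and suppose each node independently chooses a strategy from S with the probability of each s ∈ S being at least η. Let ρ = ((24+8k)/ξ_k^−)^{1/(k−1)} and let Y_u(j,s) denote the (random) number of nodes at grid distance exactly j from u that chose strategy s. Then for all n ≥ |S|, with probability at least 1 − 1/n it holds that Y_u(j,s) > η·b_u(j)/2 for every node u ∈ V, every s ∈ S, and every integer j with ρ·(ln n/η)^{1/(k−1)} ≤ j ≤ n/2. -/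
open Finset

noncomputable section

open Classical in
lemma DRB_prod_sum_one {V : Type*} [Fintype V] [DecidableEq V] (S : Finset ℝ)
    (p : ℝ → ℝ) (hsum : ∑ s ∈ S, p s = 1) :
    ∑ σ : V → {x : ℝ // x ∈ S}, ∏ u, p (σ u) = 1 := by
  have h := Finset.prod_univ_sum (fun _ : V => (Finset.univ : Finset {x : ℝ // x ∈ S}))
      (fun _ x => p (x : ℝ))
  rw [Fintype.piFinset_univ] at h
  rw [← h]
  have hone : ∑ x : {x : ℝ // x ∈ S}, p (x : ℝ) = 1 := by
    rw [Finset.univ_eq_attach, Finset.sum_attach S (fun s => p s)]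
    exact hsum
  rw [Finset.prod_congr rfl (fun _ _ => hone), Finset.prod_const, one_pow]

open Classical in
lemma DRB_chernoff_one {V : Type*} [Fintype V] [DecidableEq V] (S : Finset ℝ)
    (p : ℝ → ℝ) (hp0 : ∀ s ∈ S, 0 ≤ p s) (hsum : ∑ s ∈ S, p s = 1)
    (B : Finset V) (s₀ : ℝ) (hs₀ : s₀ ∈ S) (m : ℝ) :
    ∑ σ ∈ Finset.univ.filter (fun σ : V → {x : ℝ // x ∈ S} =>
        ((B.filter (fun v => ((σ v : ℝ) = s₀))).card : ℝ) ≤ m),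
      ∏ u, p (σ u)
    ≤ Real.exp (m * Real.log 2) * (1 - p s₀ / 2) ^ B.card := by
  set W : (V → {x : ℝ // x ∈ S}) → ℝ := fun σ =>
    ∏ u, (p (σ u) * (if u ∈ B ∧ ((σ u : ℝ) = s₀) then (2:ℝ)⁻¹ else 1)) with hW
  have hWnn : ∀ σ, 0 ≤ W σ := by
    intro σ
    apply Finset.prod_nonneg
    intro u _
    have := hp0 _ (σ u).2
    split <;> nlinarith
  have hWeq : ∀ σ : V → {x : ℝ // x ∈ S}, W σ =
      (∏ u, p (σ u)) * (2:ℝ)⁻¹ ^ ((B.filter (fun v => ((σ v : ℝ) = s₀))).card) := by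
    intro σ
    rw [hW]
    dsimp only
    rw [Finset.prod_mul_distrib]
    congr 1
    rw [← Finset.prod_filter_mul_prod_filter_not Finset.univ
        (fun u => u ∈ B ∧ ((σ u : ℝ) = s₀))]
    rw [Finset.prod_ite_of_true, Finset.prod_ite_of_false]
    · rw [Finset.prod_const, Finset.prod_const, one_pow, mul_one]
      congr 1
      congr 1
      ext v
      simp [and_comm]
    · intro u hu; simpa using hu
    · intro u hu; simpa using hu
  -- step: for σ in event, ∏ p (σ u) ≤ exp (m log 2) * W σ
  have key : ∀ σ ∈ Finset.univ.filter (fun σ : V → {x : ℝ // x ∈ S} =>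
        ((B.filter (fun v => ((σ v : ℝ) = s₀))).card : ℝ) ≤ m),
      ∏ u, p (σ u) ≤ Real.exp (m * Real.log 2) * W σ := by
    intro σ hσ
    rw [Finset.mem_filter] at hσ
    set Y := (B.filter (fun v => ((σ v : ℝ) = s₀))).card with hY
    have hYm : (Y : ℝ) ≤ m := hσ.2
    have hP : 0 ≤ ∏ u, p (σ u) :=
      Finset.prod_nonneg (fun u _ => hp0 _ (σ u).2)
    rw [hWeq σ]
    have h2 : ((2:ℝ)) ^ Y ≤ Real.exp (m * Real.log 2) := by
      have : ((2:ℝ)) ^ Y = Real.exp ((Y:ℝ) * Real.log 2) := by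
        rw [Real.exp_nat_mul, Real.exp_log]; norm_num
      rw [this]
      exact Real.exp_le_exp.mpr (by nlinarith [Real.log_pos (by norm_num : (1:ℝ) < 2)])
    calc ∏ u, p (σ u) = (∏ u, p (σ u)) * ((2:ℝ)^Y * (2:ℝ)⁻¹ ^ Y) := by
          rw [← mul_pow]; norm_num
      _ ≤ Real.exp (m * Real.log 2) * ((∏ u, p (σ u)) * (2:ℝ)⁻¹ ^ Y) := by
          have h2i : (0:ℝ) ≤ (2:ℝ)⁻¹ ^ Y := by positivity
          nlinarith [mul_nonneg hP h2i]
  calc ∑ σ ∈ Finset.univ.filter (fun σ : V → {x : ℝ // x ∈ S} =>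
        ((B.filter (fun v => ((σ v : ℝ) = s₀))).card : ℝ) ≤ m), ∏ u, p (σ u)
      ≤ ∑ σ ∈ Finset.univ.filter (fun σ : V → {x : ℝ // x ∈ S} =>
        ((B.filter (fun v => ((σ v : ℝ) = s₀))).card : ℝ) ≤ m),
          Real.exp (m * Real.log 2) * W σ := Finset.sum_le_sum key
    _ ≤ ∑ σ : V → {x : ℝ // x ∈ S}, Real.exp (m * Real.log 2) * W σ := by
        apply Finset.sum_le_sum_of_subset_of_nonneg (Finset.filter_subset _ _)
        intro σ _ _
        exact mul_nonneg (Real.exp_nonneg _) (hWnn σ)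
    _ = Real.exp (m * Real.log 2) * ∑ σ : V → {x : ℝ // x ∈ S}, W σ := by
        rw [Finset.mul_sum]
    _ ≤ Real.exp (m * Real.log 2) * (1 - p s₀ / 2) ^ B.card := by
        apply mul_le_mul_of_nonneg_left _ (Real.exp_nonneg _)
        -- compute the sum exactly
        have hfact : ∑ σ : V → {x : ℝ // x ∈ S}, W σ =
            ∏ u : V, ∑ x : {x : ℝ // x ∈ S},
              (p (x : ℝ) * (if u ∈ B ∧ ((x : ℝ) = s₀) then (2:ℝ)⁻¹ else 1)) := by
          rw [hW]
          rw [Finset.prod_univ_sum (fun _ : V => (Finset.univ : Finset {x : ℝ // x ∈ S}))]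
          rw [Fintype.piFinset_univ]
        rw [hfact]
        have hinner : ∀ u : V, (∑ x : {x : ℝ // x ∈ S},
            (p (x : ℝ) * (if u ∈ B ∧ ((x : ℝ) = s₀) then (2:ℝ)⁻¹ else 1)))
            = if u ∈ B then 1 - p s₀ / 2 else 1 := by
          intro u
          by_cases hu : u ∈ B
          · simp only [hu, true_and, if_true]
            have : ∀ x : {x : ℝ // x ∈ S},
                p (x:ℝ) * (if ((x : ℝ) = s₀) then (2:ℝ)⁻¹ else 1)
                = p (x:ℝ) - (if ((x:ℝ) = s₀) then p (x:ℝ) / 2 else 0) := by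
              intro x; split <;> ring
            rw [Finset.sum_congr rfl (fun x _ => this x), Finset.sum_sub_distrib]
            rw [Finset.univ_eq_attach, Finset.sum_attach S (fun s => p s),
              Finset.sum_attach S (fun s => if s = s₀ then p s / 2 else 0), hsum]
            rw [Finset.sum_ite_eq' S s₀ (fun s => p s / 2)]
            simp [hs₀]
          · simp only [hu, false_and, if_false, mul_one]
            rw [Finset.univ_eq_attach, Finset.sum_attach S (fun s => p s)]
            exact hsum
        rw [Finset.prod_congr rfl (fun u _ => hinner u)]
        rw [Finset.prod_ite_mem, Finset.univ_inter, Finset.prod_const]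

set_option maxHeartbeats 1000000 in
open Classical in
/-- Chernoff-type density lemma, `k > 1`: if each node
independently chooses a strategy from the finite set `S`, each `s ∈ S` with
probability at least `η > 0`, then for `n ≥ |S|`, with probability at least
`1 - 1/n`, every node `u`, every `s ∈ S`, and every distance level `j` with
`ρ·(ln n/η)^{1/(k-1)} ≤ j ≤ n/2` has more than `η·b_u(j)/2` nodes at distance
exactly `j` from `u` that chose `s`, where `ρ = ((24+8k)/ξ_k^-)^{1/(k-1)}`. -/
theorem chernoff_density (k g : ℕ) (hk : 1 < k) (hg : 2 ≤ g)
    (ξm : ℝ) (hξm : 0 < ξm) (n : ℕ)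
    (hb : ∀ u : DRB.Node n k, ∀ j : ℕ, 1 ≤ j → j ≤ n / 2 →
      ξm * (j : ℝ) ^ (k - 1) ≤ (DRB.countAt n k u j : ℝ))
    (η : ℝ) (hη : 0 < η) (S : Finset ℝ)
    (hSsig : ∀ s ∈ S, DRB.InSigma (g : ℝ)⁻¹ s)
    (p : ℝ → ℝ) (hp : ∀ s ∈ S, η ≤ p s) (hsum : ∑ s ∈ S, p s = 1)
    (hn : S.card ≤ n) :
    1 - 1 / (n : ℝ) ≤
      ∑ σ ∈ Finset.univ.filter (fun σ : DRB.Node n k → {x : ℝ // x ∈ S} =>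
          ∀ u : DRB.Node n k, ∀ s ∈ S, ∀ j : ℕ,
            ((24 + 8 * (k : ℝ)) / ξm) ^ ((1 : ℝ) / ((k : ℝ) - 1)) *
                (Real.log n / η) ^ ((1 : ℝ) / ((k : ℝ) - 1)) ≤ (j : ℝ) →
            (j : ℝ) ≤ (n : ℝ) / 2 →
            η * (DRB.countAt n k u j : ℝ) / 2 <
              ((Finset.univ.filter (fun v : DRB.Node n k =>
                  v ≠ u ∧ DRB.dM n k u v = j ∧ (σ v : ℝ) = s)).card : ℝ)),
        ∏ u, p (σ u) := by
  classical
  by_cases hn2 : n < 2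
  · interval_cases n
    · exfalso
      have hS : S = ∅ := Finset.card_eq_zero.mp (Nat.le_zero.mp hn)
      rw [hS] at hsum; simp at hsum
    · have h0 : (1:ℝ) - 1 / ((1:ℕ):ℝ) = 0 := by norm_num
      rw [h0]
      apply Finset.sum_nonneg
      intro σ _
      exact Finset.prod_nonneg (fun u _ => le_trans hη.le (hp _ (σ u).2))
  push_neg at hn2
  have hn1 : (1:ℝ) < n := by exact_mod_cast hn2
  have hn0 : (0:ℝ) < n := by linarith
  have hlogn : 0 < Real.log n := Real.log_pos hn1
  have hp0 : ∀ s ∈ S, 0 ≤ p s := fun s hs => le_trans hη.le (hp s hs)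
  have hPnn : ∀ σ : DRB.Node n k → {x : ℝ // x ∈ S}, 0 ≤ ∏ u, p (σ u) :=
    fun σ => Finset.prod_nonneg (fun u _ => hp0 _ (σ u).2)
  set d : ℕ := k - 1 with hdd
  have hd1 : 1 ≤ d := by omega
  have hdr : ((k:ℝ) - 1) = (d:ℝ) := by
    rw [hdd, Nat.cast_sub (le_of_lt hk)]; simp
  set C : ℝ := (24 + 8 * (k : ℝ)) / ξm with hCdef
  set L : ℝ := Real.log n / η with hLdef
  set e : ℝ := (1 : ℝ) / ((k : ℝ) - 1) with hedef
  have hC : 0 < C := div_pos (by positivity) hξm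
  have hL : 0 < L := div_pos hlogn hη
  set Good : (DRB.Node n k → {x : ℝ // x ∈ S}) → Prop := fun σ =>
    ∀ u : DRB.Node n k, ∀ s ∈ S, ∀ j : ℕ,
      C ^ e * L ^ e ≤ (j : ℝ) →
      (j : ℝ) ≤ (n : ℝ) / 2 →
      η * (DRB.countAt n k u j : ℝ) / 2 <
        ((Finset.univ.filter (fun v : DRB.Node n k =>
            v ≠ u ∧ DRB.dM n k u v = j ∧ (σ v : ℝ) = s)).card : ℝ) with hGood
  show 1 - 1 / (n:ℝ) ≤ ∑ σ ∈ Finset.univ.filter Good, ∏ u, p (σ u)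
  have htotal : ∑ σ : DRB.Node n k → {x : ℝ // x ∈ S}, ∏ u, p (σ u) = 1 :=
    DRB_prod_sum_one S p hsum
  have hsplit := Finset.sum_filter_add_sum_filter_not Finset.univ Good
    (fun σ => ∏ u, p (σ u))
  rw [htotal] at hsplit
  -- it suffices to bound the bad part
  suffices hbad : ∑ σ ∈ Finset.univ.filter (fun σ => ¬ Good σ),
      ∏ u, p (σ u) ≤ 1 / (n:ℝ) by linarith
  -- bad events
  set Bad : DRB.Node n k × ℝ × ℕ → (DRB.Node n k → {x : ℝ // x ∈ S}) → Prop :=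
    fun t σ =>
      C ^ e * L ^ e ≤ (t.2.2 : ℝ) ∧ (t.2.2 : ℝ) ≤ (n : ℝ) / 2 ∧
      ((Finset.univ.filter (fun v : DRB.Node n k =>
          v ≠ t.1 ∧ DRB.dM n k t.1 v = t.2.2 ∧ (σ v : ℝ) = t.2.1)).card : ℝ) ≤
        η * (DRB.countAt n k t.1 t.2.2 : ℝ) / 2 with hBad
  set T : Finset (DRB.Node n k × ℝ × ℕ) :=
    Finset.univ ×ˢ S ×ˢ Finset.range (n / 2 + 1) with hT
  have hjr : ∀ j : ℕ, (j : ℝ) ≤ (n:ℝ)/2 → j ≤ n / 2 := by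
    intro j hj
    have h2j : (2 * j : ℝ) ≤ (n : ℝ) := by linarith
    have : 2 * j ≤ n := by exact_mod_cast h2j
    omega
  -- union bound
  have hub : ∑ σ ∈ Finset.univ.filter (fun σ => ¬ Good σ), ∏ u, p (σ u) ≤
      ∑ t ∈ T, ∑ σ ∈ Finset.univ.filter (Bad t), ∏ u, p (σ u) := by
    calc ∑ σ ∈ Finset.univ.filter (fun σ => ¬ Good σ), ∏ u, p (σ u)
        ≤ ∑ σ ∈ Finset.univ.filter (fun σ => ¬ Good σ),
            ∑ t ∈ T, (if Bad t σ then ∏ u, p (σ u) else 0) := by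
          apply Finset.sum_le_sum
          intro σ hσ
          rw [Finset.mem_filter] at hσ
          have hσ2 := hσ.2
          simp only [hGood] at hσ2
          push_neg at hσ2
          obtain ⟨u, s, hs, j, h1, h2, h3⟩ := hσ2
          have ht : (u, s, j) ∈ T := by
            rw [hT]
            refine Finset.mem_product.mpr ⟨Finset.mem_univ _,
              Finset.mem_product.mpr ⟨hs, Finset.mem_range.mpr ?_⟩⟩
            show j < n / 2 + 1
            have := hjr j h2; omega
          have hnn : ∀ t ∈ T, 0 ≤ (if Bad t σ then ∏ u, p (σ u) else 0) := by
            intro t _; split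
            · exact hPnn σ
            · exact le_refl 0
          have := Finset.single_le_sum hnn ht
          rwa [if_pos ⟨h1, h2, h3⟩] at this
      _ = ∑ t ∈ T, ∑ σ ∈ Finset.univ.filter (fun σ => ¬ Good σ),
            (if Bad t σ then ∏ u, p (σ u) else 0) := Finset.sum_comm
      _ ≤ ∑ t ∈ T, ∑ σ ∈ Finset.univ.filter (Bad t), ∏ u, p (σ u) := by
          apply Finset.sum_le_sum
          intro t _
          rw [← Finset.sum_filter]
          apply Finset.sum_le_sum_of_subset_of_nonneg
          · exact Finset.filter_subset_filter _ (Finset.filter_subset _ _)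
          · intro σ _ _; exact hPnn σ
  -- per-event bound
  have hone : ∀ t ∈ T, ∑ σ ∈ Finset.univ.filter (Bad t), ∏ u, p (σ u) ≤
      Real.exp (-(((k:ℝ) + 3) * Real.log n)) := by
    rintro ⟨u, s, j⟩ ht
    rw [hT, Finset.mem_product] at ht
    obtain ⟨-, hts⟩ := ht
    rw [Finset.mem_product] at hts
    obtain ⟨hs, -⟩ := hts
    by_cases hc : C ^ e * L ^ e ≤ (j : ℝ) ∧ (j : ℝ) ≤ (n : ℝ) / 2
    case neg =>
      have : Finset.univ.filter (Bad (u, s, j)) = ∅ := by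
        apply Finset.filter_false_of_mem
        intro σ _ hB
        exact hc ⟨hB.1, hB.2.1⟩
      rw [this, Finset.sum_empty]
      exact Real.exp_nonneg _
    case pos =>
    obtain ⟨h1, h2⟩ := hc
    have hρL : 0 < C ^ e * L ^ e :=
      mul_pos (Real.rpow_pos_of_pos hC _) (Real.rpow_pos_of_pos hL _)
    have hj1 : 1 ≤ j := by
      have : (0:ℝ) < (j:ℝ) := lt_of_lt_of_le hρL h1
      exact_mod_cast Nat.one_le_cast.mpr (by exact_mod_cast Nat.cast_pos.mp this)
    have hj2 : j ≤ n / 2 := hjr j h2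
    have hbj := hb u j hj1 hj2
    -- j^d ≥ C * L
    have hjd : C * L ≤ (j : ℝ) ^ d := by
      have hmul : (C * L) ^ e ≤ (j : ℝ) := by
        rwa [Real.mul_rpow hC.le hL.le]
      have hed : e * (d : ℝ) = 1 := by
        rw [hedef, hdr]
        field_simp
      calc C * L = ((C * L) ^ e) ^ ((d : ℝ)) := by
            rw [← Real.rpow_mul (le_of_lt (mul_pos hC hL)), hed, Real.rpow_one]
        _ ≤ (j : ℝ) ^ ((d : ℝ)) := by
            apply Real.rpow_le_rpow (Real.rpow_nonneg (le_of_lt (mul_pos hC hL)) _)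
              hmul (Nat.cast_nonneg d)
        _ = (j : ℝ) ^ d := Real.rpow_natCast _ d
    set b : ℝ := (DRB.countAt n k u j : ℝ) with hbdef
    have hbnn : 0 ≤ b := Nat.cast_nonneg _
    have hηb : (24 + 8 * (k:ℝ)) * Real.log n ≤ η * b := by
      have h5 : ξm * (C * L) ≤ ξm * ((j:ℝ) ^ d) :=
        mul_le_mul_of_nonneg_left hjd hξm.le
      have h6 : ξm * (C * L) = (24 + 8 * (k:ℝ)) * Real.log n / η := by
        rw [hCdef, hLdef]; field_simp
      have h7 : (24 + 8 * (k:ℝ)) * Real.log n / η ≤ b := by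
        rw [← h6]; exact le_trans h5 hbj
      rw [div_le_iff₀ hη] at h7
      linarith
    -- apply the Chernoff bound
    set B : Finset (DRB.Node n k) :=
      Finset.univ.filter (fun v => v ≠ u ∧ DRB.dM n k u v = j) with hBdef
    have hBcard : (B.card : ℝ) = b := by
      rw [hbdef, hBdef, DRB.countAt]
    have hsub : Finset.univ.filter (Bad (u, s, j)) ⊆
        Finset.univ.filter (fun σ : DRB.Node n k → {x : ℝ // x ∈ S} =>
          ((B.filter (fun v => ((σ v : ℝ) = s))).card : ℝ) ≤ η * b / 2) := by
      intro σ hσ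
      rw [Finset.mem_filter] at hσ ⊢
      refine ⟨Finset.mem_univ _, ?_⟩
      have h8 := hσ.2.2.2
      have h9 : (Finset.univ.filter (fun v : DRB.Node n k =>
          v ≠ u ∧ DRB.dM n k u v = j ∧ (σ v : ℝ) = s)) =
          B.filter (fun v => ((σ v : ℝ) = s)) := by
        rw [hBdef, Finset.filter_filter]
        apply Finset.filter_congr
        intro v _
        tauto
      rw [← h9]
      exact h8
    have hps1 : p s ≤ 1 := by
      rw [← hsum]
      exact Finset.single_le_sum hp0 hs
    have hps : η ≤ p s := hp s hs
    calc ∑ σ ∈ Finset.univ.filter (Bad (u, s, j)), ∏ v, p (σ v)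
        ≤ ∑ σ ∈ Finset.univ.filter (fun σ : DRB.Node n k → {x : ℝ // x ∈ S} =>
            ((B.filter (fun v => ((σ v : ℝ) = s))).card : ℝ) ≤ η * b / 2),
            ∏ v, p (σ v) := by
          apply Finset.sum_le_sum_of_subset_of_nonneg hsub
          intro σ _ _; exact hPnn σ
      _ ≤ Real.exp ((η * b / 2) * Real.log 2) * (1 - p s / 2) ^ B.card :=
          DRB_chernoff_one S p hp0 hsum B s hs (η * b / 2)
      _ ≤ Real.exp ((η * b / 2) * Real.log 2) * Real.exp (-(p s / 2)) ^ B.card := by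
          apply mul_le_mul_of_nonneg_left _ (Real.exp_nonneg _)
          apply pow_le_pow_left₀ (by linarith)
          nlinarith [Real.add_one_le_exp (-(p s / 2))]
      _ = Real.exp ((η * b / 2) * Real.log 2 + (B.card : ℝ) * (-(p s / 2))) := by
          have hpow : Real.exp (-(p s / 2)) ^ B.card
              = Real.exp ((B.card : ℝ) * (-(p s / 2))) := (Real.exp_nat_mul _ _).symm
          rw [hpow, ← Real.exp_add]
      _ ≤ Real.exp (-(((k:ℝ) + 3) * Real.log n)) := by
          apply Real.exp_le_exp.mpr
          rw [hBcard]
          have hl2 : Real.log 2 < 0.6931471808 := Real.log_two_lt_d9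
          have hl2' : (0:ℝ) < Real.log 2 := Real.log_pos (by norm_num)
          have hbp : η * b ≤ p s * b := mul_le_mul_of_nonneg_right hps hbnn
          have hkL : (0:ℝ) ≤ ((24:ℝ) + 8 * (k:ℝ)) * Real.log n := by positivity
          have hh1 : (0:ℝ) ≤ (η * b - ((24:ℝ) + 8 * (k:ℝ)) * Real.log n) * (1 - Real.log 2) :=
            mul_nonneg (by linarith) (by linarith)
          have hh3 : (0:ℝ) ≤ (((24:ℝ) + 8 * (k:ℝ)) * Real.log n) * (0.6931471808 - Real.log 2) :=
            mul_nonneg hkL (by linarith)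
          have hh4 : (0:ℝ) ≤ (k:ℝ) * Real.log n := by positivity
          linarith [hh1, hh3, hh4, hbp, hlogn.le]
  -- combine
  have hcount : (T.card : ℝ) ≤ (n:ℝ) ^ (k + 2) := by
    rw [hT, Finset.card_product, Finset.card_product, Finset.card_univ,
      Finset.card_range, Fintype.card_fun]
    have hr : n / 2 + 1 ≤ n := by omega
    have : (Fintype.card (Fin n)) ^ (Fintype.card (Fin k)) * (S.card * (n / 2 + 1)) ≤
        n ^ k * (n * n) := by
      simp only [Fintype.card_fin]
      exact Nat.mul_le_mul_left _ (Nat.mul_le_mul hn hr)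
    calc ((Fintype.card (Fin n) ^ Fintype.card (Fin k) * (S.card * (n / 2 + 1)) : ℕ) : ℝ)
        ≤ ((n ^ k * (n * n) : ℕ) : ℝ) := by exact_mod_cast this
      _ = (n:ℝ) ^ (k + 2) := by push_cast; ring
  have hexp : Real.exp (-(((k:ℝ) + 3) * Real.log n)) = ((n:ℝ) ^ (k + 3))⁻¹ := by
    rw [Real.exp_neg]
    congr 1
    rw [show ((k:ℝ) + 3) = ((k + 3 : ℕ) : ℝ) by push_cast; ring,
      Real.exp_nat_mul, Real.exp_log hn0]
  calc ∑ σ ∈ Finset.univ.filter (fun σ => ¬ Good σ), ∏ u, p (σ u)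
      ≤ ∑ t ∈ T, ∑ σ ∈ Finset.univ.filter (Bad t), ∏ u, p (σ u) := hub
    _ ≤ ∑ t ∈ T, Real.exp (-(((k:ℝ) + 3) * Real.log n)) := Finset.sum_le_sum hone
    _ = (T.card : ℝ) * Real.exp (-(((k:ℝ) + 3) * Real.log n)) := by
        rw [Finset.sum_const, nsmul_eq_mul]
    _ ≤ (n:ℝ) ^ (k + 2) * Real.exp (-(((k:ℝ) + 3) * Real.log n)) :=
        mul_le_mul_of_nonneg_right hcount (Real.exp_nonneg _)
    _ = 1 / (n:ℝ) := by
        rw [hexp, pow_succ]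
        field_simp
        ring
end
end
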